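/- arXiv:2404.17696 — 9 statements merged into one kernel-verified Lean document; each statement's English description precedes it below -/
import Mathlib

section
/- Let S ⊆ ℝⁿ be a closed set, x̄ ∈ S, and d ∈ T_S(x̄) (the Bouligand tangent cone). Then the union of the outer second-order tangent set T²_S(x̄; d) and the set of nonzero elements of the asymptotic second-order tangent cone T''_S(x̄; d) is nonempty; i.e., T²_S(x̄; d) ∪ (T''_S(x̄; d) \ {0}) ≠ ∅. -/
open Filter Topology Set
open scoped RealInnerProductSpace

noncomputable section

variable {E : Type*} [NormedAddCommGroup E] [InnerProductSpace ℝ E]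

/-- Bouligand (contingent) tangent cone. -/
def tangentConeB (S : Set E) (x : E) : Set E :=
  {d | ∃ (t : ℕ → ℝ) (dk : ℕ → E), (∀ k, 0 < t k) ∧
    Tendsto t atTop (nhds 0) ∧ Tendsto dk atTop (nhds d) ∧
    ∀ k, x + t k • dk k ∈ S}

/-- Outer second-order tangent set. -/
def secondTangent (S : Set E) (x d : E) : Set E :=
  {w | ∃ (t : ℕ → ℝ) (wk : ℕ → E), (∀ k, 0 < t k) ∧
    Tendsto t atTop (nhds 0) ∧ Tendsto wk atTop (nhds w) ∧
    ∀ k, x + t k • d + ((1/2 : ℝ) * t k ^ 2) • wk k ∈ S}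

/-- Asymptotic second-order tangent cone. -/
def asympTangent (S : Set E) (x d : E) : Set E :=
  {w | ∃ (t r : ℕ → ℝ) (wk : ℕ → E), (∀ k, 0 < t k) ∧ (∀ k, 0 < r k) ∧
    Tendsto t atTop (nhds 0) ∧ Tendsto r atTop (nhds 0) ∧
    Tendsto (fun k => t k / r k) atTop (nhds 0) ∧
    Tendsto wk atTop (nhds w) ∧
    ∀ k, x + t k • d + ((1/2 : ℝ) * t k * r k) • wk k ∈ S}

/-- Fréchet (regular) normal cone (empty, by convention, outside of `S`). -/
def frechetNormal (S : Set E) (x : E) : Set E :=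
  {v | x ∈ S ∧ ∀ ε > (0:ℝ), ∃ δ > (0:ℝ), ∀ y ∈ S, ‖y - x‖ < δ →
    ⟪v, y - x⟫ ≤ ε * ‖y - x‖}

/-- Limiting (Mordukhovich) normal cone. -/
def limitingNormal (S : Set E) (x : E) : Set E :=
  {v | ∃ (xk vk : ℕ → E), Tendsto xk atTop (nhds x) ∧
    Tendsto vk atTop (nhds v) ∧ ∀ k, vk k ∈ frechetNormal S (xk k)}

/-- Directional limiting normal cone. -/
def dirLimitingNormal (S : Set E) (x d : E) : Set E :=
  {v | ∃ (t : ℕ → ℝ) (dk vk : ℕ → E), (∀ k, 0 < t k) ∧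
    Tendsto t atTop (nhds 0) ∧ Tendsto dk atTop (nhds d) ∧
    Tendsto vk atTop (nhds v) ∧ ∀ k, vk k ∈ frechetNormal S (x + t k • dk k)}

/-- Directional regular (Clarke) tangent cone. -/
def dirClarkeTangent (S : Set E) (x d : E) : Set E :=
  {v | ∀ (t : ℕ → ℝ) (dk : ℕ → E), (∀ k, 0 < t k) →
    Tendsto t atTop (nhds 0) → Tendsto dk atTop (nhds d) →
    (∀ k, x + t k • dk k ∈ S) →
    ∃ vk : ℕ → E, Tendsto vk atTop (nhds v) ∧
      ∀ k, vk k ∈ tangentConeB S (x + t k • dk k)}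

/-- Directional neighborhood `V_{ρ,δ}(d)`. -/
def dirNbhd (d : E) (ρ δ : ℝ) : Set E :=
  {w | ‖w‖ ≤ δ ∧ ‖‖d‖ • w - ‖w‖ • d‖ ≤ ρ * ‖w‖ * ‖d‖}

/-- Support function, with values in `EReal` (so that `σ_∅ = -∞`). -/
def suppFn (A : Set E) (l : E) : EReal :=
  ⨆ u ∈ A, ((⟪l, u⟫ : ℝ) : EReal)

theorem stmt0 {n : ℕ} (S : Set (EuclideanSpace ℝ (Fin n))) (hS : IsClosed S)
    (x : EuclideanSpace ℝ (Fin n)) (hx : x ∈ S) (d : EuclideanSpace ℝ (Fin n))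
    (hd : d ∈ tangentConeB S x) :
    (secondTangent S x d ∪ (asympTangent S x d \ {0})).Nonempty := by
  classical
  obtain ⟨t, dk, ht, ht0, hdk, hmem⟩ := hd
  set w : ℕ → EuclideanSpace ℝ (Fin n) := fun k => (2 / t k) • (dk k - d) with hw
  have hmem2 : ∀ k, x + t k • d + ((1/2 : ℝ) * t k ^ 2) • w k ∈ S := by
    intro k
    have htk : t k ≠ 0 := (ht k).ne'
    have h1 : ((1/2 : ℝ) * t k ^ 2) • w k = t k • (dk k - d) := by
      rw [hw, smul_smul]
      congr 1
      field_simp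
    have h2 : x + t k • d + t k • (dk k - d) = x + t k • dk k := by
      rw [smul_sub]; abel
    rw [h1, h2]; exact hmem k
  by_cases H : Tendsto (fun k => ‖w k‖) atTop atTop
  · -- unbounded case: asymptotic tangent cone
    obtain ⟨φ, hφ, hφ1⟩ := Filter.extraction_of_frequently_atTop
      ((H.eventually_ge_atTop 1).frequently)
    have hφat : Tendsto φ atTop atTop := hφ.tendsto_atTop
    set v : ℕ → EuclideanSpace ℝ (Fin n) :=
      fun j => (‖w (φ j)‖)⁻¹ • w (φ j) with hv
    have hne : ∀ j, ‖w (φ j)‖ ≠ 0 := fun j => by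
      have := hφ1 j; positivity
    have hvmem : ∀ j, v j ∈ Metric.sphere (0 : EuclideanSpace ℝ (Fin n)) 1 := by
      intro j
      simp only [hv, mem_sphere_zero_iff_norm, norm_smul, norm_inv, norm_norm]
      exact inv_mul_cancel₀ (hne j)
    obtain ⟨a, ha, ψ, hψ, hlim⟩ :=
      (isCompact_sphere (0 : EuclideanSpace ℝ (Fin n)) 1).tendsto_subseq hvmem
    have hψat : Tendsto ψ atTop atTop := hψ.tendsto_atTop
    set χ : ℕ → ℕ := φ ∘ ψ with hχ
    have hχat : Tendsto χ atTop atTop := hφat.comp hψat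
    refine ⟨a, Or.inr ⟨⟨fun j => t (χ j), fun j => t (χ j) * ‖w (χ j)‖,
      fun j => v (ψ j), fun j => ht _, fun j => ?_, ht0.comp hχat, ?_, ?_, hlim, ?_⟩, ?_⟩⟩
    · exact mul_pos (ht _) (lt_of_lt_of_le one_pos (hφ1 (ψ j)))
    · -- r → 0 : equals 2 ‖dk - d‖
      have heq : (fun j => t (χ j) * ‖w (χ j)‖) = fun j => 2 * ‖dk (χ j) - d‖ := by
        funext j
        have htk : t (χ j) ≠ 0 := (ht _).ne'
        have h2t : (0:ℝ) < 2 / t (χ j) := div_pos two_pos (ht _)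
        rw [hw]
        simp only [norm_smul, Real.norm_eq_abs, abs_of_pos h2t]
        field_simp
      rw [heq]
      have : Tendsto (fun j => ‖dk (χ j) - d‖) atTop (nhds 0) := by
        have := ((hdk.comp hχat).sub_const d)
        simpa using this.norm
      simpa using this.const_mul 2
    · -- t/r → 0
      have heq : (fun j => t (χ j) / (t (χ j) * ‖w (χ j)‖))
          = fun j => (‖w (χ j)‖)⁻¹ := by
        funext j
        have htk : t (χ j) ≠ 0 := (ht _).ne'
        rw [div_mul_eq_div_div, div_self htk, one_div]
      rw [heq]
      exact tendsto_inv_atTop_zero.comp (H.comp hχat)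
    · -- membership
      intro j
      simp only [hχ, Function.comp_apply]
      have hne' : ‖w (φ (ψ j))‖ ≠ 0 := hne (ψ j)
      have h1 : ((1/2 : ℝ) * t (φ (ψ j)) * (t (φ (ψ j)) * ‖w (φ (ψ j))‖)) • v (ψ j)
          = ((1/2 : ℝ) * t (φ (ψ j)) ^ 2) • w (φ (ψ j)) := by
        rw [hv, smul_smul]
        congr 1
        field_simp
      rw [h1]
      exact hmem2 (φ (ψ j))
    · -- a ≠ 0
      intro h
      rw [mem_singleton_iff] at h
      rw [h, mem_sphere_zero_iff_norm, norm_zero] at ha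
      exact one_ne_zero ha.symm
  · -- bounded case: second order tangent set
    simp only [tendsto_atTop, not_forall, Filter.not_eventually, not_le] at H
    obtain ⟨M, hM⟩ := H
    obtain ⟨φ, hφ, hφM⟩ := Filter.extraction_of_frequently_atTop hM
    have hwmem : ∀ j, w (φ j) ∈ Metric.closedBall (0 : EuclideanSpace ℝ (Fin n)) M :=
      fun j => by simpa [Metric.mem_closedBall, dist_zero_right] using (hφM j).le
    obtain ⟨a, _, ψ, hψ, hlim⟩ :=
      (isCompact_closedBall (0 : EuclideanSpace ℝ (Fin n)) M).tendsto_subseq hwmem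
    have hχat : Tendsto (φ ∘ ψ) atTop atTop := hφ.tendsto_atTop.comp hψ.tendsto_atTop
    exact ⟨a, Or.inl ⟨fun j => t (φ (ψ j)), fun j => w (φ (ψ j)),
      fun j => ht _, ht0.comp hχat, hlim, fun j => hmem2 _⟩⟩
end
end

section
/- Let S ⊆ ℝⁿ be a closed set, x̄ ∈ S, and d ∈ T_S(x̄). Then T''_S(x̄; d) + T̂_S(x̄; d) = T''_S(x̄; d), where T̂_S(x̄; d) is the directional regular (Clarke) tangent cone. -/
open Filter Topology Set
open scoped RealInnerProductSpace Pointwise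

noncomputable section

variable {E : Type*} [NormedAddCommGroup E] [InnerProductSpace ℝ E]

set_option maxHeartbeats 1000000

variable [ProperSpace E]

lemma zero_mem_tangentConeB {S : Set E} {y : E} (hy : y ∈ S) : (0:E) ∈ tangentConeB S y :=
  ⟨fun m => 1/(m+1), fun _ => 0, fun m => by positivity,
    tendsto_one_div_add_atTop_nhds_zero_nat, tendsto_const_nhds, fun m => by simpa using hy⟩

lemma zero_mem_dirClarke {S : Set E} (x d : E) : (0:E) ∈ dirClarkeTangent S x d :=
  fun t dk _ _ _ hmem => ⟨fun _ => 0, tendsto_const_nhds, fun k => zero_mem_tangentConeB (hmem k)⟩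

lemma key_add {S : Set E} (hS : IsClosed S) {x : E} (hx : x ∈ S) {d w v : E}
    (hw : w ∈ asympTangent S x d) (hv : v ∈ dirClarkeTangent S x d) :
    w + v ∈ asympTangent S x d := by
  obtain ⟨t, r, wk, ht, hr, ht0, hr0, htr, hwk, hmem⟩ := hw
  set σ : ℕ → ℝ := fun k => (1/2 : ℝ) * t k * r k with hσdef
  have hσ : ∀ k, 0 < σ k := fun k => by have := ht k; have := hr k; positivity
  set y : ℕ → E := fun k => x + t k • d + σ k • wk k with hydef
  have hyS : ∀ k, y k ∈ S := hmem
  have hSne : S.Nonempty := ⟨x, hx⟩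
  have hmain : ∀ ε > (0:ℝ), ∀ᶠ k in atTop,
      Metric.infDist (y k + σ k • v) S ≤ ε * σ k := by
    intro ε hε
    by_contra hcon
    rw [Filter.not_eventually] at hcon
    obtain ⟨φ, hφ, hφP⟩ := Filter.extraction_of_frequently_atTop
      (hcon.mono fun k h => not_le.mp h)
    -- hφP : ∀ j, ε * σ (φ j) < infDist (y (φ j) + σ (φ j) • v) S
    set A : ℕ → Set ℝ := fun j =>
      Set.Icc (0:ℝ) (σ (φ j)) ∩ {τ | Metric.infDist (y (φ j) + τ • v) S ≤ ε * τ} with hAdef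
    have hA0 : ∀ j, (0:ℝ) ∈ A j := by
      intro j
      refine ⟨⟨le_refl 0, (hσ (φ j)).le⟩, ?_⟩
      simp [Metric.infDist_zero_of_mem (hyS (φ j))]
    have hAbdd : ∀ j, BddAbove (A j) := fun j => ⟨σ (φ j), fun τ hτ => hτ.1.2⟩
    have hAclosed : ∀ j, IsClosed (A j) := by
      intro j
      exact isClosed_Icc.inter (isClosed_le
        ((Metric.continuous_infDist_pt S).comp (continuous_const.add (continuous_id.smul continuous_const)))
        (continuous_const.mul continuous_id))
    set τs : ℕ → ℝ := fun j => sSup (A j) with hτdef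
    have hτmem : ∀ j, τs j ∈ A j := fun j =>
      (hAclosed j).csSup_mem ⟨0, hA0 j⟩ (hAbdd j)
    have hτle : ∀ j, τs j ≤ σ (φ j) := fun j => (hτmem j).1.2
    have hτ0 : ∀ j, 0 ≤ τs j := fun j => (hτmem j).1.1
    have hτd : ∀ j, Metric.infDist (y (φ j) + τs j • v) S ≤ ε * τs j := fun j => (hτmem j).2
    have hτlt : ∀ j, τs j < σ (φ j) := by
      intro j
      rcases (hτle j).lt_or_eq with h | h
      · exact h
      · exfalso
        have h2 := hτd j
        rw [h] at h2
        exact absurd h2 (not_le.mpr (hφP j))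
    have hz : ∀ j, ∃ z, z ∈ S ∧
        Metric.infDist (y (φ j) + τs j • v) S = dist (y (φ j) + τs j • v) z := fun j =>
      hS.exists_infDist_eq_dist hSne _
    choose z hzS hzd using hz
    have hez : ∀ j, ‖y (φ j) + τs j • v - z j‖ ≤ ε * τs j := by
      intro j
      rw [← dist_eq_norm, ← hzd j]
      exact hτd j
    set dk' : ℕ → E := fun j => (t (φ j))⁻¹ • (z j - x) with hdk'def
    have hteq : ∀ j, x + t (φ j) • dk' j = z j := by
      intro j
      rw [hdk'def]
      simp [smul_smul, mul_inv_cancel₀ (ht (φ j)).ne']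
    have htφ : Tendsto (fun j => t (φ j)) atTop (nhds 0) := ht0.comp hφ.tendsto_atTop
    have hrφ : Tendsto (fun j => r (φ j)) atTop (nhds 0) := hr0.comp hφ.tendsto_atTop
    have hwφ : Tendsto (fun j => wk (φ j)) atTop (nhds w) := hwk.comp hφ.tendsto_atTop
    have hdk' : Tendsto dk' atTop (nhds d) := by
      rw [tendsto_iff_norm_sub_tendsto_zero]
      have hbound : ∀ j, ‖dk' j - d‖ ≤ r (φ j) / 2 * (‖wk (φ j)‖ + ‖v‖ + ε) := by
        intro j
        have h1 : dk' j - d = (t (φ j))⁻¹ • (z j - x - t (φ j) • d) := by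
          rw [hdk'def, smul_sub, smul_smul, inv_mul_cancel₀ (ht (φ j)).ne', one_smul]
        have h2 : z j - x - t (φ j) • d
            = σ (φ j) • wk (φ j) + τs j • v + (z j - (y (φ j) + τs j • v)) := by
          rw [hydef]; module
        have h3 : ‖z j - x - t (φ j) • d‖ ≤ σ (φ j) * (‖wk (φ j)‖ + ‖v‖ + ε) := by
          rw [h2]
          have e1 : ‖σ (φ j) • wk (φ j)‖ = σ (φ j) * ‖wk (φ j)‖ := by
            rw [norm_smul, Real.norm_of_nonneg (hσ (φ j)).le]
          have e2 : ‖τs j • v‖ ≤ σ (φ j) * ‖v‖ := by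
            rw [norm_smul, Real.norm_of_nonneg (hτ0 j)]
            exact mul_le_mul_of_nonneg_right (hτle j) (norm_nonneg v)
          have e3 : ‖z j - (y (φ j) + τs j • v)‖ ≤ σ (φ j) * ε := by
            rw [norm_sub_rev]
            calc ‖y (φ j) + τs j • v - z j‖ ≤ ε * τs j := hez j
              _ ≤ σ (φ j) * ε := by
                  rw [mul_comm]
                  exact mul_le_mul_of_nonneg_right (hτle j) hε.le
          calc ‖σ (φ j) • wk (φ j) + τs j • v + (z j - (y (φ j) + τs j • v))‖
              ≤ ‖σ (φ j) • wk (φ j) + τs j • v‖ + ‖z j - (y (φ j) + τs j • v)‖ := norm_add_le _ _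
            _ ≤ ‖σ (φ j) • wk (φ j)‖ + ‖τs j • v‖ + ‖z j - (y (φ j) + τs j • v)‖ := by
                have := norm_add_le (σ (φ j) • wk (φ j)) (τs j • v); linarith
            _ ≤ σ (φ j) * ‖wk (φ j)‖ + σ (φ j) * ‖v‖ + σ (φ j) * ε := by
                rw [e1]; linarith [e2, e3]
            _ = σ (φ j) * (‖wk (φ j)‖ + ‖v‖ + ε) := by ring
        calc ‖dk' j - d‖ = (t (φ j))⁻¹ * ‖z j - x - t (φ j) • d‖ := by
              rw [h1, norm_smul, Real.norm_of_nonneg (inv_nonneg.mpr (ht (φ j)).le)]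
          _ ≤ (t (φ j))⁻¹ * (σ (φ j) * (‖wk (φ j)‖ + ‖v‖ + ε)) := by
              apply mul_le_mul_of_nonneg_left h3 (inv_nonneg.mpr (ht (φ j)).le)
          _ = r (φ j) / 2 * (‖wk (φ j)‖ + ‖v‖ + ε) := by
              rw [hσdef]
              field_simp [(ht (φ j)).ne']
      have hlim : Tendsto (fun j => r (φ j) / 2 * (‖wk (φ j)‖ + ‖v‖ + ε)) atTop
          (nhds (0 / 2 * (‖w‖ + ‖v‖ + ε))) :=
        (hrφ.div_const 2).mul ((hwφ.norm.add tendsto_const_nhds).add tendsto_const_nhds)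
      simp only [zero_div, zero_mul] at hlim
      exact squeeze_zero (fun j => norm_nonneg _) hbound hlim
    obtain ⟨u, hu, humem⟩ := hv (fun j => t (φ j)) dk' (fun j => ht (φ j)) htφ hdk'
      (fun j => by rw [hteq j]; exact hzS j)
    have hεu : ∀ᶠ j in atTop, ‖u j - v‖ < ε / 2 := by
      have := hu.eventually (Metric.ball_mem_nhds v (half_pos hε))
      simpa [Metric.mem_ball, dist_eq_norm] using this
    obtain ⟨j, hj⟩ := hεu.exists
    have humem' : u j ∈ tangentConeB S (z j) := by
      rw [← hteq j]; exact humem j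
    obtain ⟨s, a, hs, hs0, ha, hmem'⟩ := humem'
    have hsmall : ∀ᶠ m in atTop, s m < σ (φ j) - τs j :=
      hs0.eventually (gt_mem_nhds (by linarith [hτlt j]))
    have haclose : ∀ᶠ m in atTop, ‖a m - u j‖ < ε / 2 := by
      have := ha.eventually (Metric.ball_mem_nhds (u j) (half_pos hε))
      simpa [Metric.mem_ball, dist_eq_norm] using this
    obtain ⟨m, h1, h2⟩ := (hsmall.and haclose).exists
    have hp : z j + s m • a m ∈ S := hmem' m
    have hva : ‖v - a m‖ ≤ ε := by
      calc ‖v - a m‖ = ‖(a m - u j) + (u j - v)‖ := by rw [norm_sub_rev]; congr 1; abel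
        _ ≤ ‖a m - u j‖ + ‖u j - v‖ := norm_add_le _ _
        _ ≤ ε := by linarith
    have hτ'A : τs j + s m ∈ A j := by
      refine ⟨⟨by linarith [hτ0 j, hs m], by linarith⟩, ?_⟩
      calc Metric.infDist (y (φ j) + (τs j + s m) • v) S
          ≤ dist (y (φ j) + (τs j + s m) • v) (z j + s m • a m) :=
            Metric.infDist_le_dist_of_mem hp
        _ = ‖(y (φ j) + τs j • v - z j) + s m • (v - a m)‖ := by
            rw [dist_eq_norm]
            congr 1
            rw [add_smul, smul_sub]
            abel
        _ ≤ ‖y (φ j) + τs j • v - z j‖ + s m * ‖v - a m‖ := by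
            have := norm_add_le (y (φ j) + τs j • v - z j) (s m • (v - a m))
            rw [norm_smul, Real.norm_of_nonneg (hs m).le] at this
            exact this
        _ ≤ ε * τs j + s m * ε := by
            have := mul_le_mul_of_nonneg_left hva (hs m).le
            linarith [hez j]
        _ = ε * (τs j + s m) := by ring
    have := le_csSup (hAbdd j) hτ'A
    have : τs j + s m ≤ τs j := this
    linarith [hs m]
  -- conclusion
  have hq : ∀ k, ∃ q, q ∈ S ∧
      Metric.infDist (y k + σ k • v) S = dist (y k + σ k • v) q := fun k =>
    hS.exists_infDist_eq_dist hSne _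
  choose q hqS hqd using hq
  set g : ℕ → E := fun k => q k - (y k + σ k • v) with hgdef
  have hg : Tendsto (fun k => (σ k)⁻¹ • g k) atTop (nhds 0) := by
    rw [NormedAddCommGroup.tendsto_nhds_zero]
    intro ε hε
    filter_upwards [hmain (ε / 2) (half_pos hε)] with k hk
    have : ‖(σ k)⁻¹ • g k‖ = (σ k)⁻¹ * ‖g k‖ := by
      rw [norm_smul, Real.norm_of_nonneg (inv_nonneg.mpr (hσ k).le)]
    rw [this]
    have hng : ‖g k‖ ≤ ε / 2 * σ k := by
      rw [hgdef]
      calc ‖q k - (y k + σ k • v)‖ = dist (y k + σ k • v) (q k) := by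
            rw [dist_eq_norm, norm_sub_rev]
        _ = Metric.infDist (y k + σ k • v) S := (hqd k).symm
        _ ≤ ε / 2 * σ k := hk
    calc (σ k)⁻¹ * ‖g k‖ ≤ (σ k)⁻¹ * (ε / 2 * σ k) :=
          mul_le_mul_of_nonneg_left hng (inv_nonneg.mpr (hσ k).le)
      _ = ε / 2 * (σ k * (σ k)⁻¹) := by ring
      _ = ε / 2 := by rw [mul_inv_cancel₀ (hσ k).ne', mul_one]
      _ < ε := by linarith
  refine ⟨t, r, fun k => wk k + v + (σ k)⁻¹ • g k, ht, hr, ht0, hr0, htr, ?_, ?_⟩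
  · have := (hwk.add (tendsto_const_nhds (x := v))).add hg
    simpa using this
  · intro k
    have heq : x + t k • d + σ k • (wk k + v + (σ k)⁻¹ • g k) = q k := by
      rw [smul_add, smul_add, smul_inv_smul₀ (hσ k).ne', hgdef, hydef]
      module
    rw [show ((1/2 : ℝ) * t k * r k) = σ k from rfl, heq]
    exact hqS k

theorem stmt3 {n : ℕ} (S : Set (EuclideanSpace ℝ (Fin n))) (hS : IsClosed S)
    (x : EuclideanSpace ℝ (Fin n)) (hx : x ∈ S) (d : EuclideanSpace ℝ (Fin n))
    (hd : d ∈ tangentConeB S x) :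
    asympTangent S x d + dirClarkeTangent S x d = asympTangent S x d := by
  ext z
  constructor
  · rintro hz
    rw [Set.mem_add] at hz
    obtain ⟨a, ha, b, hb, rfl⟩ := hz
    exact key_add hS hx ha hb
  · intro hz
    rw [Set.mem_add]
    exact ⟨z, hz, 0, zero_mem_dirClarke x d, add_zero z⟩
end
end

section
/- Let S ⊆ ℝⁿ be a closed set, x̄ ∈ S, and d ∈ T_S(x̄). Then for every w ∈ T''_S(x̄; d), the limiting (Mordukhovich) normal cone to T''_S(x̄; d) at w is contained in the directional limiting normal cone N_S(x̄; d); that is, N_{T''_S(x̄;d)}(w) ⊆ N_S(x̄; d). -/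
open Filter Topology Set
open scoped RealInnerProductSpace

noncomputable section

variable {E : Type*} [NormedAddCommGroup E] [InnerProductSpace ℝ E]

lemma prox_mem_frechetNormal {S : Set E} {p y : E} (hp : p ∈ S)
    (hmin : ∀ z ∈ S, ‖y - p‖ ≤ ‖y - z‖) {c : ℝ} (hc : 0 < c) :
    c⁻¹ • (y - p) ∈ frechetNormal S p := by
  refine ⟨hp, fun ε hε => ⟨2 * c * ε, by positivity, fun z hz hdz => ?_⟩⟩
  have key : 2 * ⟪y - p, z - p⟫ ≤ ‖z - p‖ ^ 2 := by
    have h1 : ‖y - p‖ ^ 2 ≤ ‖y - z‖ ^ 2 := by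
      have := hmin z hz
      nlinarith [norm_nonneg (y - p), norm_nonneg (y - z)]
    have h2 : y - z = (y - p) - (z - p) := by abel
    rw [h2, norm_sub_sq_real (y - p) (z - p)] at h1
    linarith
  rw [real_inner_smul_left]
  have hn : (0:ℝ) ≤ ‖z - p‖ := norm_nonneg _
  have hcinv : (0:ℝ) < c⁻¹ := inv_pos.mpr hc
  have h3 : ⟪y - p, z - p⟫ ≤ c * ε * ‖z - p‖ := by nlinarith
  calc c⁻¹ * ⟪y - p, z - p⟫ ≤ c⁻¹ * (c * ε * ‖z - p‖) := by
        exact mul_le_mul_of_nonneg_left h3 hcinv.le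
    _ = ε * ‖z - p‖ := by field_simp

lemma dirLimitingNormal_of_approx {S : Set E} {x d v : E}
    (h : ∀ ε > (0:ℝ), ∃ (t : ℝ) (dk vk : E), 0 < t ∧ t < ε ∧ ‖dk - d‖ < ε ∧
      ‖vk - v‖ < ε ∧ vk ∈ frechetNormal S (x + t • dk)) :
    v ∈ dirLimitingNormal S x d := by
  choose t dk vk ht htε hdk hvk hmem using fun k : ℕ => h (1 / (k + 1)) (by positivity)
  refine ⟨t, dk, vk, ht, ?_, ?_, ?_, hmem⟩
  · exact squeeze_zero (fun k => (ht k).le) (fun k => (htε k).le)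
      tendsto_one_div_add_atTop_nhds_zero_nat
  · rw [tendsto_iff_norm_sub_tendsto_zero]
    exact squeeze_zero (fun k => norm_nonneg _) (fun k => (hdk k).le)
      tendsto_one_div_add_atTop_nhds_zero_nat
  · rw [tendsto_iff_norm_sub_tendsto_zero]
    exact squeeze_zero (fun k => norm_nonneg _) (fun k => (hvk k).le)
      tendsto_one_div_add_atTop_nhds_zero_nat

lemma approx_of_dirLimitingNormal {S : Set E} {x d v : E} (h : v ∈ dirLimitingNormal S x d) :
    ∀ ε > (0:ℝ), ∃ (t : ℝ) (dk vk : E), 0 < t ∧ t < ε ∧ ‖dk - d‖ < ε ∧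
      ‖vk - v‖ < ε ∧ vk ∈ frechetNormal S (x + t • dk) := by
  obtain ⟨t, dk, vk, hpos, ht, hdk, hvk, hmem⟩ := h
  intro ε hε
  obtain ⟨N1, h1⟩ := Metric.tendsto_atTop.mp ht ε hε
  obtain ⟨N2, h2⟩ := Metric.tendsto_atTop.mp hdk ε hε
  obtain ⟨N3, h3⟩ := Metric.tendsto_atTop.mp hvk ε hε
  set N := max N1 (max N2 N3) with hN
  refine ⟨t N, dk N, vk N, hpos _, ?_, ?_, ?_, hmem _⟩
  · have := h1 N (by omega)
    rw [Real.dist_eq, sub_zero] at this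
    exact lt_of_le_of_lt (le_abs_self _) this
  · have := h2 N (by omega)
    rwa [dist_eq_norm] at this
  · have := h3 N (by omega)
    rwa [dist_eq_norm] at this

lemma exists_proj {n : ℕ} {S : Set (EuclideanSpace ℝ (Fin n))} (hS : IsClosed S)
    (hne : S.Nonempty) (y : EuclideanSpace ℝ (Fin n)) :
    ∃ p ∈ S, ∀ z ∈ S, ‖y - p‖ ≤ ‖y - z‖ := by
  obtain ⟨p, hp, hdist⟩ := hS.exists_infDist_eq_dist hne y
  refine ⟨p, hp, fun z hz => ?_⟩
  rw [← dist_eq_norm, ← dist_eq_norm, ← hdist]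
  exact Metric.infDist_le_dist_of_mem hz

set_option maxHeartbeats 1000000 in
lemma core {n : ℕ} {S : Set (EuclideanSpace ℝ (Fin n))} (hS : IsClosed S)
    {x d w v : EuclideanSpace ℝ (Fin n)}
    (hv : v ∈ frechetNormal (asympTangent S x d) w) :
    v ∈ dirLimitingNormal S x d := by
  obtain ⟨hwA, hN⟩ := hv
  obtain ⟨t, r, wk, htpos, hrpos, ht0, hr0, htr, hwk, hmemS⟩ := hwA
  apply dirLimitingNormal_of_approx
  intro εo hεo
  obtain ⟨δ, hδ, hNδ⟩ := hN (εo / 3) (by linarith)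
  set ρ := δ / (2 * ‖v‖ + 1) with hρdef
  have hρ : 0 < ρ := by positivity
  set c : ℕ → ℝ := fun k => (1/2 : ℝ) * t k * r k with hc
  have hcpos : ∀ k, 0 < c k := fun k => by
    have h1 := htpos k; have h2 := hrpos k
    show (0:ℝ) < (1/2 : ℝ) * t k * r k
    positivity
  set s : ℕ → EuclideanSpace ℝ (Fin n) := fun k => x + t k • d + (c k) • wk k with hs
  have hsS : ∀ k, s k ∈ S := hmemS
  have hSne : S.Nonempty := ⟨s 0, hsS 0⟩
  set y : ℕ → EuclideanSpace ℝ (Fin n) := fun k => s k + (c k * ρ) • v with hy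
  choose p hpS hpmin using fun k => exists_proj hS hSne (y k)
  set u : ℕ → EuclideanSpace ℝ (Fin n) := fun k => (c k * ρ)⁻¹ • (y k - p k) with hu
  have hcρ : ∀ k, 0 < c k * ρ := fun k => mul_pos (hcpos k) hρ
  -- norm bound for u
  have hub : ∀ k, ‖u k‖ ≤ ‖v‖ := by
    intro k
    have h1 : ‖y k - p k‖ ≤ ‖y k - s k‖ := hpmin k _ (hsS k)
    have h2 : y k - s k = (c k * ρ) • v := by
      show s k + (c k * ρ) • v - s k = (c k * ρ) • v
      abel
    rw [h2, norm_smul, Real.norm_eq_abs, abs_of_pos (hcρ k)] at h1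
    have h3 : ‖u k‖ = (c k * ρ)⁻¹ * ‖y k - p k‖ := by
      show ‖(c k * ρ)⁻¹ • (y k - p k)‖ = _
      rw [norm_smul, Real.norm_eq_abs, abs_inv, abs_of_pos (hcρ k)]
    rw [h3, inv_mul_le_iff₀ (hcρ k)]
    linarith
  -- u k is a Fréchet normal at p k
  have humem : ∀ k, u k ∈ frechetNormal S (p k) :=
    fun k => prox_mem_frechetNormal (hpS k) (hpmin k) (hcρ k)
  -- the quotient points
  set q : ℕ → EuclideanSpace ℝ (Fin n) := fun k => wk k + ρ • (v - u k) with hq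
  have hpq : ∀ k, x + t k • d + c k • q k = p k := by
    intro k
    have h1 : (c k * ρ) • u k = y k - p k := smul_inv_smul₀ (hcρ k).ne' _
    have h2 : c k • q k = c k • wk k + ((c k * ρ) • v - (y k - p k)) := by
      rw [← h1]
      show c k • (wk k + ρ • (v - u k)) = c k • wk k + ((c k * ρ) • v - (c k * ρ) • u k)
      rw [smul_add, smul_smul, smul_sub]
    rw [h2]
    have h3 : y k = x + t k • d + c k • wk k + (c k * ρ) • v := by
      show s k + (c k * ρ) • v = _
      show x + t k • d + c k • wk k + (c k * ρ) • v = _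
      rfl
    rw [h3]
    abel
  have hqS : ∀ k, x + t k • d + ((1/2 : ℝ) * t k * r k) • q k ∈ S := by
    intro k
    have h1 : x + t k • d + ((1/2 : ℝ) * t k * r k) • q k = p k := hpq k
    rw [h1]; exact hpS k
  -- bound for q
  have hqb : ∀ k, ‖q k‖ ≤ ‖wk k‖ + ρ * (2 * ‖v‖) := by
    intro k
    have h0 : ‖q k‖ ≤ ‖wk k‖ + ‖ρ • (v - u k)‖ := norm_add_le _ _
    have h1 : ‖ρ • (v - u k)‖ = ρ * ‖v - u k‖ := by
      rw [norm_smul, Real.norm_eq_abs, abs_of_pos hρ]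
    have h2 : ‖v - u k‖ ≤ ‖v‖ + ‖u k‖ := norm_sub_le _ _
    have h3 := hub k
    nlinarith
  -- eventually conditions
  have hBtend : Tendsto (fun k => (r k / 2) * (‖wk k‖ + ρ * (2 * ‖v‖))) atTop (nhds 0) := by
    have h1 : Tendsto (fun k => r k / 2) atTop (nhds 0) := by
      simpa using hr0.div_const 2
    have h2 : Tendsto (fun k => ‖wk k‖ + ρ * (2 * ‖v‖)) atTop
        (nhds (‖w‖ + ρ * (2 * ‖v‖))) := (hwk.norm).add tendsto_const_nhds
    simpa using h1.mul h2
  have hA : ∀ᶠ k in atTop, t k < εo := ht0.eventually_lt_const hεo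
  have hB : ∀ᶠ k in atTop, ‖(r k / 2) • q k‖ < εo := by
    filter_upwards [hBtend.eventually_lt_const hεo] with k hk
    have h1 : ‖(r k / 2) • q k‖ = (r k / 2) * ‖q k‖ := by
      rw [norm_smul, Real.norm_eq_abs, abs_of_pos (by have := hrpos k; linarith)]
    have h2 := hqb k
    have h3 : (0:ℝ) < r k / 2 := by have := hrpos k; linarith
    nlinarith [norm_nonneg (q k)]
  by_contra hcon
  push_neg at hcon
  -- every index in the tail has ‖u k - v‖ ≥ εo
  have hlow : ∀ᶠ k in atTop, εo ≤ ‖u k - v‖ := by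
    filter_upwards [hA, hB] with k hk1 hk2
    by_contra hlt
    push_neg at hlt
    have hfr : u k ∈ frechetNormal S (x + t k • (d + (r k / 2) • q k)) := by
      have heq : x + t k • (d + (r k / 2) • q k) = x + t k • d + c k • q k := by
        rw [smul_add, smul_smul]
        have : t k * (r k / 2) = c k := by show _ = (1/2 : ℝ) * t k * r k; ring
        rw [this, add_assoc]
      rw [heq, hpq k]
      exact humem k
    have h4 := hcon (t k) (d + (r k / 2) • q k) (u k) (htpos k) hk1
      (by rwa [add_sub_cancel_left]) hlt
    exact h4 hfr
  -- extract convergent subsequence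
  have hball : ∀ k, u k ∈ Metric.closedBall (0 : EuclideanSpace ℝ (Fin n)) ‖v‖ := by
    intro k
    rw [Metric.mem_closedBall, dist_zero_right]
    exact hub k
  obtain ⟨uL, huLmem, φ, hφ, hconv⟩ :=
    (isCompact_closedBall (0 : EuclideanSpace ℝ (Fin n)) ‖v‖).tendsto_subseq hball
  have huLb : ‖uL‖ ≤ ‖v‖ := by
    rwa [Metric.mem_closedBall, dist_zero_right] at huLmem
  -- limit of q along φ
  have hqconv : Tendsto (fun k => q (φ k)) atTop (nhds (w + ρ • (v - uL))) := by
    have h1 : Tendsto (fun k => wk (φ k)) atTop (nhds w) := hwk.comp hφ.tendsto_atTop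
    have h2 : Tendsto (fun k => v - u (φ k)) atTop (nhds (v - uL)) :=
      tendsto_const_nhds.sub hconv
    exact h1.add (h2.const_smul ρ)
  -- the limit is in the asymptotic tangent cone
  have hqA : w + ρ • (v - uL) ∈ asympTangent S x d := by
    refine ⟨fun k => t (φ k), fun k => r (φ k), fun k => q (φ k),
      fun k => htpos _, fun k => hrpos _, ht0.comp hφ.tendsto_atTop,
      hr0.comp hφ.tendsto_atTop, htr.comp hφ.tendsto_atTop, hqconv, fun k => hqS (φ k)⟩
  -- apply Fréchet normal inequality
  have hnear : ‖(w + ρ • (v - uL)) - w‖ < δ := by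
    rw [add_sub_cancel_left, norm_smul, Real.norm_eq_abs, abs_of_pos hρ]
    have h1 : ‖v - uL‖ ≤ 2 * ‖v‖ := by
      have h2 := norm_sub_le v uL; linarith
    have h2 : ρ * (2 * ‖v‖) < δ := by
      rw [hρdef, div_mul_eq_mul_div, div_lt_iff₀ (by positivity)]
      nlinarith [norm_nonneg v]
    nlinarith
  have hip := hNδ _ hqA hnear
  rw [add_sub_cancel_left, real_inner_smul_right, norm_smul, Real.norm_eq_abs,
    abs_of_pos hρ] at hip
  -- hip : ρ * ⟪v, v - uL⟫ ≤ εo/3 * (ρ * ‖v - uL‖)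
  have hip2 : ⟪v, v - uL⟫ ≤ εo / 3 * ‖v - uL‖ := by nlinarith
  -- lower bound on ‖v - uL‖
  have hlb : εo ≤ ‖v - uL‖ := by
    have h1 : Tendsto (fun k => ‖u (φ k) - v‖) atTop (nhds ‖uL - v‖) :=
      (hconv.sub tendsto_const_nhds).norm
    have h2 : ∀ᶠ k in atTop, εo ≤ ‖u (φ k) - v‖ := hφ.tendsto_atTop.eventually hlow
    have h3 : εo ≤ ‖uL - v‖ := ge_of_tendsto h1 h2
    rwa [norm_sub_rev] at h3
  -- contradiction
  have hsq : ‖v - uL‖ ^ 2 ≤ 2 * ⟪v, v - uL⟫ := by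
    have h1 : ‖v - uL‖ ^ 2 = ‖v‖ ^ 2 - 2 * ⟪v, uL⟫ + ‖uL‖ ^ 2 := norm_sub_sq_real v uL
    have h2 : ⟪v, v - uL⟫ = ‖v‖ ^ 2 - ⟪v, uL⟫ := by
      rw [inner_sub_right, real_inner_self_eq_norm_sq]
    nlinarith [huLb, norm_nonneg uL, norm_nonneg v]
  nlinarith [norm_nonneg (v - uL)]

theorem stmt5 {n : ℕ} (S : Set (EuclideanSpace ℝ (Fin n))) (hS : IsClosed S)
    (x : EuclideanSpace ℝ (Fin n)) (hx : x ∈ S) (d : EuclideanSpace ℝ (Fin n))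
    (hd : d ∈ tangentConeB S x) :
    ∀ w ∈ asympTangent S x d,
      limitingNormal (asympTangent S x d) w ⊆ dirLimitingNormal S x d := by
  intro w hw v hv
  obtain ⟨wm, vm, hwm, hvm, hmemm⟩ := hv
  apply dirLimitingNormal_of_approx
  intro ε hε
  obtain ⟨N, hN⟩ := Metric.tendsto_atTop.mp hvm (ε/2) (by linarith)
  obtain ⟨t, dk, vk, hpos, ht, hdk, hvk, hm⟩ :=
    approx_of_dirLimitingNormal (core hS (hmemm N)) (ε/2) (by linarith)
  refine ⟨t, dk, vk, hpos, by linarith, by linarith, ?_, hm⟩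
  have h2 := hN N le_rfl
  rw [dist_eq_norm] at h2
  calc ‖vk - v‖ ≤ ‖vk - vm N‖ + ‖vm N - v‖ := by
        have h3 := norm_add_le (vk - vm N) (vm N - v)
        simpa using h3
    _ < ε := by linarith
end
end

section
/- Let S ⊆ ℝⁿ be a closed set, x̄ ∈ S, and d ∈ T_S(x̄). Then for every w ∈ T²_S(x̄; d), the limiting normal cone to T²_S(x̄; d) at w is contained in the directional limiting normal cone N_S(x̄; d); that is, N_{T²_S(x̄;d)}(w) ⊆ N_S(x̄; d). -/
open Filter Topology Set
open scoped RealInnerProductSpace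

noncomputable section

variable {E : Type*} [NormedAddCommGroup E] [InnerProductSpace ℝ E]

lemma frechet_smul {S : Set E} {p v : E} (hv : v ∈ frechetNormal S p) {c : ℝ} (hc : 0 ≤ c) :
    c • v ∈ frechetNormal S p := by
  refine ⟨hv.1, fun ε hε => ?_⟩
  rcases hc.eq_or_lt with h | h
  · refine ⟨1, one_pos, fun y hy hny => ?_⟩
    rw [← h, zero_smul, inner_zero_left]
    positivity
  · obtain ⟨δ, hδ, hδ'⟩ := hv.2 (ε / c) (by positivity)
    refine ⟨δ, hδ, fun y hy hny => ?_⟩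
    have := hδ' y hy hny
    rw [real_inner_smul_left]
    calc c * ⟪v, y - p⟫ ≤ c * (ε / c * ‖y - p‖) := mul_le_mul_of_nonneg_left this h.le
      _ = ε * ‖y - p‖ := by field_simp

lemma prox_frechet {S : Set E} {p q : E} (hp : p ∈ S) {c : ℝ} (hc : 0 ≤ c)
    (h : ∀ s ∈ S, ⟪q, s - p⟫ ≤ c * ‖s - p‖ ^ 2) : q ∈ frechetNormal S p := by
  refine ⟨hp, fun ε hε => ⟨ε / (c + 1), by positivity, fun y hy hny => ?_⟩⟩
  have h1 := h y hy
  have h2 : (0:ℝ) ≤ ‖y - p‖ := norm_nonneg _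
  have h3 : c * ‖y - p‖ ≤ c * (ε / (c + 1)) := mul_le_mul_of_nonneg_left hny.le hc
  have h4 : c * (ε / (c + 1)) ≤ ε := by
    rw [mul_div_assoc']
    rw [div_le_iff₀ (by positivity)]
    nlinarith
  calc ⟪q, y - p⟫ ≤ c * ‖y - p‖ ^ 2 := h1
    _ = (c * ‖y - p‖) * ‖y - p‖ := by ring
    _ ≤ ε * ‖y - p‖ := mul_le_mul_of_nonneg_right (h3.trans h4) h2

lemma zero_frechet {S : Set E} {p : E} (hp : p ∈ S) : (0 : E) ∈ frechetNormal S p :=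
  ⟨hp, fun ε hε => ⟨1, one_pos, fun y _ _ => by rw [inner_zero_left]; positivity⟩⟩

lemma dirLim_closed {S : Set E} {x d : E} {vj : ℕ → E} {v : E}
    (hvj : Tendsto vj atTop (nhds v)) (hmem : ∀ j, vj j ∈ dirLimitingNormal S x d) :
    v ∈ dirLimitingNormal S x d := by
  have key : ∀ j : ℕ, ∃ (t₀ : ℝ) (d₀ v₀ : E), 0 < t₀ ∧ t₀ < 1 / (j + 1) ∧
      ‖d₀ - d‖ < 1 / (j + 1) ∧ ‖v₀ - vj j‖ < 1 / (j + 1) ∧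
      v₀ ∈ frechetNormal S (x + t₀ • d₀) := by
    intro j
    obtain ⟨t, dk, vk, htp, ht, hdk, hvk, hF⟩ := hmem j
    have hj : (0:ℝ) < 1 / (j + 1) := by positivity
    have e1 : ∀ᶠ k in atTop, t k < 1 / (j + 1) := ht.eventually_lt_const hj
    have e2 : ∀ᶠ k in atTop, ‖dk k - d‖ < 1 / (j + 1) :=
      Tendsto.eventually_lt_const hj
        (by simpa using (tendsto_sub_nhds_zero_iff.2 hdk).norm)
    have e3 : ∀ᶠ k in atTop, ‖vk k - vj j‖ < 1 / (j + 1) :=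
      Tendsto.eventually_lt_const hj
        (by simpa using (tendsto_sub_nhds_zero_iff.2 hvk).norm)
    obtain ⟨k, hk1, hk2, hk3⟩ := (e1.and (e2.and e3)).exists
    exact ⟨t k, dk k, vk k, htp k, hk1, hk2, hk3, hF k⟩
  choose t₀ d₀ v₀ h1 h2 h3 h4 h5 using key
  have hto : Tendsto (fun j : ℕ => 1 / ((j:ℝ) + 1)) atTop (nhds 0) :=
    tendsto_one_div_add_atTop_nhds_zero_nat
  refine ⟨t₀, d₀, v₀, h1, ?_, ?_, ?_, h5⟩
  · exact squeeze_zero (fun j => (h1 j).le) (fun j => (h2 j).le) hto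
  · rw [← tendsto_sub_nhds_zero_iff]
    exact squeeze_zero_norm (fun j => (h3 j).le) hto
  · rw [← tendsto_sub_nhds_zero_iff]
    refine squeeze_zero_norm (f := fun j => v₀ j - v) (fun j => ?_)
      (a := fun j => 1 / ((j:ℝ)+1) + ‖vj j - v‖) ?_
    · calc ‖v₀ j - v‖ ≤ ‖v₀ j - vj j‖ + ‖vj j - v‖ := norm_sub_le_norm_sub_add_norm_sub _ _ _
        _ ≤ 1 / (j+1) + ‖vj j - v‖ := by gcongr; exact (h4 j).le
    · simpa using hto.add ((tendsto_sub_nhds_zero_iff.2 hvj).norm)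

set_option maxHeartbeats 2000000 in
lemma core_lemma [FiniteDimensional ℝ E] {S : Set E} (hS : IsClosed S) {x d w v : E}
    (hx : x ∈ S) (hvnorm : ‖v‖ = 1)
    (hv : v ∈ frechetNormal (secondTangent S x d) w) :
    v ∈ dirLimitingNormal S x d := by
  obtain ⟨hwT, hFre⟩ := hv
  obtain ⟨t, wk, htp, ht, hwk, hmem⟩ := hwT
  obtain ⟨M, hM⟩ : ∃ M : ℝ, ∀ k, ‖wk k‖ ≤ M := by
    obtain ⟨M, hM⟩ := (hwk.norm).bddAbove_range
    exact ⟨M, fun k => hM ⟨k, rfl⟩⟩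
  have key : ∀ m : ℕ, ∃ (t₀ : ℝ) (d₀ v₀ : E), 0 < t₀ ∧ t₀ < 1 / (m + 1) ∧
      ‖d₀ - d‖ < 1 / (m + 1) ∧
      ‖v₀ - v‖ < 1 / (m + 1) + Real.sqrt (2 / (m + 1)) ∧
      v₀ ∈ frechetNormal S (x + t₀ • d₀) := by
    intro m
    set ε : ℝ := 1 / (2 * ((m:ℝ) + 1)) with hε_def
    have hε : 0 < ε := by positivity
    obtain ⟨δ, hδ, hδ'⟩ := hFre ε hε
    set ρ : ℝ := min (δ / 3) 1 with hρ_def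
    have hρ : 0 < ρ := lt_min (by positivity) one_pos
    have hρδ : 2 * ρ < δ := by
      have : ρ ≤ δ / 3 := min_le_left _ _
      linarith
    set c : ℕ → ℝ := fun k => (1/2 : ℝ) * t k ^ 2 with hc_def
    have hc : ∀ k, 0 < c k := fun k => by
      have := htp k; simp only [hc_def]; positivity
    set y : ℕ → E := fun k => x + t k • d + c k • wk k with hy_def
    have hyS : ∀ k, y k ∈ S := fun k => hmem k
    set z : ℕ → E := fun k => y k + (c k * ρ) • v with hz_def
    have hproj : ∀ k, ∃ p, p ∈ S ∧ ∀ s ∈ S, dist (z k) p ≤ dist (z k) s := by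
      intro k
      obtain ⟨p, hp, hdp⟩ := hS.exists_infDist_eq_dist ⟨x, hx⟩ (z k)
      exact ⟨p, hp, fun s hs => hdp ▸ Metric.infDist_le_dist_of_mem hs⟩
    choose p hpS hpmin using hproj
    set u : ℕ → E := fun k => (c k)⁻¹ • (p k - x - t k • d) with hu_def
    have hpu : ∀ k, p k = x + t k • d + c k • u k := by
      intro k
      simp only [hu_def]
      rw [smul_inv_smul₀ (hc k).ne']
      abel
    have hzp : ∀ k, ‖z k - p k‖ ≤ c k * ρ := by
      intro k
      have h1 := hpmin k (y k) (hyS k)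
      rw [dist_eq_norm, dist_eq_norm] at h1
      have h2 : z k - y k = (c k * ρ) • v := by simp only [hz_def]; abel
      calc ‖z k - p k‖ ≤ ‖z k - y k‖ := h1
        _ = c k * ρ := by
            rw [h2, norm_smul, Real.norm_eq_abs, abs_of_pos (mul_pos (hc k) hρ), hvnorm, mul_one]
    have hzpu : ∀ k, z k - p k = c k • (wk k + ρ • v - u k) := by
      intro k
      have hcu : c k • u k = p k - x - t k • d := by
        simp only [hu_def]
        exact smul_inv_smul₀ (hc k).ne' _
      simp only [hz_def, hy_def]
      rw [smul_sub, smul_add, smul_smul, hcu]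
      abel
    have hub : ∀ k, ‖u k - (wk k + ρ • v)‖ ≤ ρ := by
      intro k
      have h1 := hzp k
      rw [hzpu k, norm_smul, Real.norm_eq_abs, abs_of_pos (hc k)] at h1
      have h2 : ‖wk k + ρ • v - u k‖ ≤ ρ := by
        have := (mul_le_mul_iff_right₀ (hc k)).1 h1
        exact this
      calc ‖u k - (wk k + ρ • v)‖ = ‖wk k + ρ • v - u k‖ := norm_sub_rev _ _
        _ ≤ ρ := h2
    have huB : ∀ k, ‖u k‖ ≤ M + 2 * ρ := by
      intro k
      have h1 : ‖u k‖ ≤ ‖u k - (wk k + ρ • v)‖ + ‖wk k + ρ • v‖ := by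
        calc ‖u k‖ = ‖(u k - (wk k + ρ • v)) + (wk k + ρ • v)‖ := by rw [sub_add_cancel]
          _ ≤ _ := norm_add_le _ _
      have h2 : ‖wk k + ρ • v‖ ≤ M + ρ := by
        calc ‖wk k + ρ • v‖ ≤ ‖wk k‖ + ‖ρ • v‖ := norm_add_le _ _
          _ ≤ M + ρ := by
              rw [norm_smul, Real.norm_eq_abs, abs_of_pos hρ, hvnorm, mul_one]
              linarith [hM k]
      linarith [hub k]
    obtain ⟨uu, -, φ, hφ, hulim⟩ := (isCompact_closedBall (0:E) (M + 2*ρ)).tendsto_subseq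
      (fun k => mem_closedBall_zero_iff.2 (huB k))
    have hφto : Tendsto φ atTop atTop := hφ.tendsto_atTop
    have hwkφ : Tendsto (wk ∘ φ) atTop (nhds w) := hwk.comp hφto
    have huuT : uu ∈ secondTangent S x d := by
      refine ⟨t ∘ φ, u ∘ φ, fun k => htp _, ht.comp hφto, hulim, fun k => ?_⟩
      have := hpS (φ k)
      rw [hpu (φ k)] at this
      exact this
    have hulimb : ‖uu - (w + ρ • v)‖ ≤ ρ := by
      refine le_of_tendsto ((hulim.sub (hwkφ.add_const (ρ • v))).norm) ?_
      exact Filter.Eventually.of_forall fun k => hub (φ k)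
    have huw : ‖uu - w‖ ≤ 2 * ρ := by
      have h1 : uu - w = (uu - (w + ρ • v)) + ρ • v := by abel
      calc ‖uu - w‖ ≤ ‖uu - (w + ρ • v)‖ + ‖ρ • v‖ := by rw [h1]; exact norm_add_le _ _
        _ ≤ ρ + ρ := by
            rw [norm_smul, Real.norm_eq_abs, abs_of_pos hρ, hvnorm, mul_one]
            linarith [hulimb]
        _ = 2 * ρ := by ring
    have hinn : ⟪v, uu - w⟫ ≤ ε * ‖uu - w‖ := hδ' uu huuT (lt_of_le_of_lt huw hρδ)
    set q : E := w + ρ • v - uu with hq_def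
    have hqn : ‖q‖ ≤ ρ := by
      rw [hq_def, norm_sub_rev]
      exact hulimb
    have hqv : ρ * (1 - 2 * ε) ≤ ⟪v, q⟫ := by
      have h1 : q = ρ • v - (uu - w) := by rw [hq_def]; abel
      rw [h1, inner_sub_right, real_inner_smul_right, real_inner_self_eq_norm_mul_norm,
        hvnorm]
      have h2 : ⟪v, uu - w⟫ ≤ ε * (2 * ρ) := hinn.trans (by
        exact mul_le_mul_of_nonneg_left huw hε.le)
      nlinarith
    set g : E := ρ⁻¹ • q with hg_def
    have hg1 : ‖g‖ ≤ 1 := by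
      rw [hg_def, norm_smul, Real.norm_eq_abs, abs_of_pos (by positivity)]
      calc ρ⁻¹ * ‖q‖ ≤ ρ⁻¹ * ρ := mul_le_mul_of_nonneg_left hqn (inv_nonneg.2 hρ.le)
        _ = 1 := inv_mul_cancel₀ hρ.ne'
    have hgv : 1 - 2 * ε ≤ ⟪v, g⟫ := by
      have h := mul_le_mul_of_nonneg_left hqv (inv_nonneg.2 hρ.le)
      rw [hg_def, real_inner_smul_right]
      calc 1 - 2*ε = ρ⁻¹ * (ρ * (1 - 2*ε)) := by field_simp
        _ ≤ ρ⁻¹ * ⟪v, q⟫ := h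
    have hgd : ‖g - v‖ ≤ Real.sqrt (2 / (m + 1)) := by
      have hsq : ‖g - v‖ ^ 2 ≤ 2 / ((m:ℝ) + 1) := by
        rw [norm_sub_sq_real, hvnorm]
        have h3 : ‖g‖^2 ≤ 1 := by nlinarith [norm_nonneg g]
        have h4 : (1:ℝ) - 2*ε ≤ ⟪g, v⟫ := by rw [real_inner_comm]; exact hgv
        have h5 : 4 * ε = 2 / ((m:ℝ)+1) := by
          rw [hε_def]; field_simp; ring
        nlinarith
      have := Real.sqrt_le_sqrt hsq
      rwa [Real.sqrt_sq (norm_nonneg _)] at this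
    set vv : ℕ → E := fun k => (ρ⁻¹ * (c k)⁻¹) • (z k - p k) with hvv_def
    have hvvF : ∀ k, vv k ∈ frechetNormal S (p k) := by
      intro k
      refine prox_frechet (hpS k) (c := ρ⁻¹ * (c k)⁻¹ / 2) (by positivity) ?_
      intro s hs
      have hdk := hpmin k s hs
      rw [dist_eq_norm, dist_eq_norm] at hdk
      have hbase : ⟪z k - p k, s - p k⟫ ≤ (1/2) * ‖s - p k‖ ^ 2 := by
        have hexp : ‖z k - s‖^2 = ‖z k - p k‖^2 - 2 * ⟪z k - p k, s - p k⟫ + ‖s - p k‖^2 := by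
          have : z k - s = (z k - p k) - (s - p k) := by abel
          rw [this, norm_sub_sq_real]
        have hsq2 : ‖z k - p k‖^2 ≤ ‖z k - s‖^2 := pow_le_pow_left₀ (norm_nonneg _) hdk 2
        linarith
      rw [hvv_def]
      simp only
      rw [real_inner_smul_left]
      calc (ρ⁻¹ * (c k)⁻¹) * ⟪z k - p k, s - p k⟫
          ≤ (ρ⁻¹ * (c k)⁻¹) * ((1/2) * ‖s - p k‖^2) := by
            exact mul_le_mul_of_nonneg_left hbase (by positivity)
        _ = ρ⁻¹ * (c k)⁻¹ / 2 * ‖s - p k‖^2 := by ring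
    have hvveq : ∀ k, vv k = ρ⁻¹ • (wk k + ρ • v - u k) := by
      intro k
      rw [hvv_def]
      simp only
      rw [hzpu k, mul_smul, inv_smul_smul₀ (hc k).ne']
    have hvvlim : Tendsto (fun k => vv (φ k)) atTop (nhds g) := by
      simp only [hvveq]
      have : Tendsto (fun k => wk (φ k) + ρ • v - u (φ k)) atTop (nhds q) := by
        rw [hq_def]
        exact (hwkφ.add_const (ρ • v)).sub hulim
      rw [hg_def]
      exact this.const_smul _
    set dd : ℕ → E := fun k => d + ((1/2 : ℝ) * t k) • u k with hdd_def
    have hpdd : ∀ k, x + t k • dd k = p k := by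
      intro k
      rw [hpu k, hdd_def]
      simp only
      rw [smul_add, smul_smul, show t k * ((1/2:ℝ) * t k) = (1/2:ℝ) * t k ^ 2 from by ring]
      rw [hc_def]
      abel
    have hddlim : Tendsto (fun k => dd (φ k)) atTop (nhds d) := by
      have h0 : Tendsto (fun k => ((1/2:ℝ) * t (φ k)) • u (φ k)) atTop (nhds (0:E)) := by
        have hsc : Tendsto (fun k => (1/2:ℝ) * t (φ k)) atTop (nhds 0) := by
          simpa using (ht.comp hφto).const_mul (1/2:ℝ)
        simpa using hsc.smul hulim
      simp only [hdd_def]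
      simpa using (tendsto_const_nhds (x := d)).add h0
    have hjm : (0:ℝ) < 1 / ((m:ℝ) + 1) := by positivity
    have e1 : ∀ᶠ k in atTop, t (φ k) < 1 / ((m:ℝ) + 1) :=
      (ht.comp hφto).eventually_lt_const hjm
    have e2 : ∀ᶠ k in atTop, ‖dd (φ k) - d‖ < 1 / ((m:ℝ) + 1) :=
      Tendsto.eventually_lt_const hjm (by simpa using (tendsto_sub_nhds_zero_iff.2 hddlim).norm)
    have e3 : ∀ᶠ k in atTop, ‖vv (φ k) - g‖ < 1 / ((m:ℝ) + 1) :=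
      Tendsto.eventually_lt_const hjm (by simpa using (tendsto_sub_nhds_zero_iff.2 hvvlim).norm)
    obtain ⟨k, hk1, hk2, hk3⟩ := (e1.and (e2.and e3)).exists
    refine ⟨t (φ k), dd (φ k), vv (φ k), htp _, hk1, hk2, ?_, ?_⟩
    · calc ‖vv (φ k) - v‖ ≤ ‖vv (φ k) - g‖ + ‖g - v‖ := norm_sub_le_norm_sub_add_norm_sub _ _ _
        _ < 1 / ((m:ℝ)+1) + Real.sqrt (2 / (m+1)) := add_lt_add_of_lt_of_le hk3 hgd
    · rw [hpdd (φ k)]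
      exact hvvF (φ k)
  -- assemble
  choose t₀ d₀ v₀ h1 h2 h3 h4 h5 using key
  have hto : Tendsto (fun m : ℕ => 1 / ((m:ℝ) + 1)) atTop (nhds 0) :=
    tendsto_one_div_add_atTop_nhds_zero_nat
  have htob : Tendsto (fun m : ℕ => 1 / ((m:ℝ) + 1) + Real.sqrt (2 / ((m:ℝ) + 1)))
      atTop (nhds 0) := by
    have h2' : Tendsto (fun m : ℕ => (2:ℝ) / ((m:ℝ) + 1)) atTop (nhds 0) := by
      have := hto.const_mul (2:ℝ)
      simpa [mul_one_div, div_eq_mul_inv] using this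
    have hsqrt : Tendsto (fun m : ℕ => Real.sqrt (2 / ((m:ℝ) + 1))) atTop (nhds 0) := by
      have h := (Real.continuous_sqrt.tendsto 0).comp h2'
      rw [Real.sqrt_zero] at h
      exact h
    simpa using hto.add hsqrt
  refine ⟨t₀, d₀, v₀, h1, ?_, ?_, ?_, h5⟩
  · exact squeeze_zero (fun m => (h1 m).le) (fun m => (h2 m).le) hto
  · rw [← tendsto_sub_nhds_zero_iff]
    exact squeeze_zero_norm (fun m => (h3 m).le) hto
  · rw [← tendsto_sub_nhds_zero_iff]
    exact squeeze_zero_norm (fun m => (h4 m).le) htob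

lemma dirLim_smul {S : Set E} {x d v : E} (hv : v ∈ dirLimitingNormal S x d) {c : ℝ}
    (hc : 0 ≤ c) : c • v ∈ dirLimitingNormal S x d := by
  obtain ⟨t, dk, vk, htp, ht, hdk, hvk, hF⟩ := hv
  exact ⟨t, dk, fun k => c • vk k, htp, ht, hdk, hvk.const_smul c,
    fun k => frechet_smul (hF k) hc⟩

lemma zero_dirLim {S : Set E} {x d : E} (hd : d ∈ tangentConeB S x) :
    (0 : E) ∈ dirLimitingNormal S x d := by
  obtain ⟨t, dk, htp, ht, hdk, hmem⟩ := hd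
  exact ⟨t, dk, fun _ => 0, htp, ht, hdk, tendsto_const_nhds,
    fun k => zero_frechet (hmem k)⟩

theorem stmt6 {n : ℕ} (S : Set (EuclideanSpace ℝ (Fin n))) (hS : IsClosed S)
    (x : EuclideanSpace ℝ (Fin n)) (hx : x ∈ S) (d : EuclideanSpace ℝ (Fin n))
    (hd : d ∈ tangentConeB S x) :
    ∀ w ∈ secondTangent S x d,
      limitingNormal (secondTangent S x d) w ⊆ dirLimitingNormal S x d := by
  intro w _ v hv
  obtain ⟨wj, vj, _, hvj, hF⟩ := hv
  refine dirLim_closed hvj (fun j => ?_)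
  by_cases h0 : vj j = 0
  · rw [h0]; exact zero_dirLim hd
  · have hn : (0:ℝ) < ‖vj j‖ := norm_pos_iff.2 h0
    have hunit : ‖vj j‖⁻¹ • vj j ∈ frechetNormal (secondTangent S x d) (wj j) :=
      frechet_smul (hF j) (inv_nonneg.2 hn.le)
    have hnorm : ‖‖vj j‖⁻¹ • vj j‖ = 1 := norm_smul_inv_norm h0
    have h1 := core_lemma hS hx hnorm hunit
    have h2 := dirLim_smul h1 (norm_nonneg (vj j))
    rwa [smul_inv_smul₀ hn.ne'] at h2
end
end

section
/- Let S = {(x₁, x₂) ∈ ℝ² : x₁² − x₂³ = 0}, x̄ = (0,0), and d = (0,1). Then T_S(x̄) = ℝ₊·(0,1), T''_S(x̄; d) = ℝ², T²_S(x̄; d) = ∅, and consequently N_{T''_S(x̄;d)}(w) = {(0,0)} for all w ∈ ℝ², while the directional limiting normal cone N_S(x̄; d) = ℝ × {0}, showing that the inclusion N_{T''_S(x̄;d)}(w) ⊆ N_S(x̄; d) can be strict. -/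
open Filter Topology Set
open scoped RealInnerProductSpace

noncomputable section

variable {E : Type*} [NormedAddCommGroup E] [InnerProductSpace ℝ E]

section Helpers

lemma abs_coord_le (x : EuclideanSpace ℝ (Fin 2)) (i : Fin 2) : |x i| ≤ ‖x‖ := by
  rw [EuclideanSpace.norm_eq]
  rw [← Real.sqrt_sq_eq_abs]
  apply Real.sqrt_le_sqrt
  rw [Fin.sum_univ_two]
  fin_cases i <;> simp [sq_abs] <;> nlinarith [sq_nonneg (x 0), sq_nonneg (x 1)]

lemma norm_le_two (x : EuclideanSpace ℝ (Fin 2)) : ‖x‖ ≤ |x 0| + |x 1| := by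
  rw [EuclideanSpace.norm_eq, Fin.sum_univ_two]
  rw [show |x 0| + |x 1| = Real.sqrt ((|x 0| + |x 1|)^2) by
    rw [Real.sqrt_sq (by positivity)]]
  apply Real.sqrt_le_sqrt
  simp only [Real.norm_eq_abs, sq_abs]
  nlinarith [abs_nonneg (x 0), abs_nonneg (x 1), sq_abs (x 0), sq_abs (x 1),
    mul_nonneg (abs_nonneg (x 0)) (abs_nonneg (x 1))]

lemma inner_two (v w : EuclideanSpace ℝ (Fin 2)) : ⟪v, w⟫ = v 0 * w 0 + v 1 * w 1 := by
  simp [PiLp.inner_apply, Fin.sum_univ_two]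
  ring

lemma tendsto_coord {f : ℕ → EuclideanSpace ℝ (Fin 2)} {l : EuclideanSpace ℝ (Fin 2)}
    (h : Filter.Tendsto f Filter.atTop (nhds l)) (i : Fin 2) :
    Filter.Tendsto (fun k => f k i) Filter.atTop (nhds (l i)) :=
  ((EuclideanSpace.proj i : EuclideanSpace ℝ (Fin 2) →L[ℝ] ℝ).continuous.tendsto l).comp h

lemma tendsto_pair {a b : ℕ → ℝ} {la lb : ℝ} (ha : Filter.Tendsto a Filter.atTop (nhds la))
    (hb : Filter.Tendsto b Filter.atTop (nhds lb)) :
    Filter.Tendsto (fun k => (!₂[a k, b k] : EuclideanSpace ℝ (Fin 2))) Filter.atTop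
      (nhds !₂[la, lb]) := by
  have h : Filter.Tendsto (fun k => (![a k, b k] : Fin 2 → ℝ)) Filter.atTop (nhds ![la, lb]) := by
    rw [tendsto_pi_nhds]
    intro i
    fin_cases i <;> simpa
  have := ((PiLp.continuous_toLp (p := 2) (β := fun _ : Fin 2 => ℝ)).tendsto _).comp h
  exact this

lemma param {a b : ℝ} (h : a^2 = b^3) : ∃ u : ℝ, a = u^3 ∧ b = u^2 := by
  rcases eq_or_ne b 0 with hb | hb
  · subst hb
    have : a = 0 := by nlinarith [sq_nonneg a]
    exact ⟨0, by simp [this], by simp⟩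
  · have ha : a ≠ 0 := by
      intro h0; apply hb
      have : b^3 = 0 := by rw [← h, h0]; ring
      exact pow_eq_zero_iff (by norm_num) |>.mp this
    refine ⟨a / b, ?_, ?_⟩
    · field_simp
      linear_combination -h
    · field_simp
      linear_combination -h

lemma vec_eq_pair (w : EuclideanSpace ℝ (Fin 2)) : w = !₂[w 0, w 1] := by
  ext i
  fin_cases i <;> rfl

lemma invseq_pos (k : ℕ) : (0:ℝ) < 1/((k:ℝ)+1) := by positivity

lemma invseq_tendsto : Filter.Tendsto (fun k : ℕ => 1/((k:ℝ)+1)) Filter.atTop (nhds 0) :=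
  tendsto_one_div_add_atTop_nhds_zero_nat

end Helpers

section Coord
lemma coord2 (x : EuclideanSpace ℝ (Fin 2)) (t : ℝ) (v : EuclideanSpace ℝ (Fin 2)) (i : Fin 2) :
    (x + t • v) i = x i + t * v i := rfl

lemma coord3 (x : EuclideanSpace ℝ (Fin 2)) (t c : ℝ) (d v : EuclideanSpace ℝ (Fin 2)) (i : Fin 2) :
    (x + t • d + c • v) i = x i + t * d i + c * v i := rfl

lemma zero_coord (i : Fin 2) : (0 : EuclideanSpace ℝ (Fin 2)) i = 0 := rfl

lemma pair0 (a b : ℝ) : (!₂[a, b] : EuclideanSpace ℝ (Fin 2)) 0 = a := rfl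
lemma pair1 (a b : ℝ) : (!₂[a, b] : EuclideanSpace ℝ (Fin 2)) 1 = b := rfl

lemma cube_nonneg {a : ℝ} (h : 0 ≤ a ^ 3) : 0 ≤ a := by
  by_contra h'
  push_neg at h'
  exact absurd h (not_le.mpr (Odd.pow_neg ⟨1, by norm_num⟩ h'))
end Coord

lemma coord_sub (y p : EuclideanSpace ℝ (Fin 2)) (i : Fin 2) : (y - p) i = y i - p i := rfl

lemma param' {a b : ℝ} (h : a^2 = b^3) (hb : b ≠ 0) : a = (a/b)^3 ∧ b = (a/b)^2 := by
  have ha : a ≠ 0 := by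
    intro h0; apply hb
    have : b^3 = 0 := by rw [← h, h0]; ring
    exact pow_eq_zero_iff (by norm_num) |>.mp this
  constructor
  · field_simp
    linear_combination -h
  · field_simp
    linear_combination -h

lemma tendsto_of_sq {f : ℕ → ℝ} (h : Filter.Tendsto (fun k => f k ^ 2) Filter.atTop (nhds 0)) :
    Filter.Tendsto f Filter.atTop (nhds 0) := by
  have hs := (Real.continuous_sqrt.tendsto 0).comp h
  rw [Real.sqrt_zero] at hs
  rw [tendsto_zero_iff_norm_tendsto_zero]
  refine hs.congr (fun k => ?_)
  simp [Real.sqrt_sq_eq_abs]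

lemma part1 (S : Set (EuclideanSpace ℝ (Fin 2)))
    (hS : S = {x : EuclideanSpace ℝ (Fin 2) | (x 0) ^ 2 - (x 1) ^ 3 = 0}) :
    tangentConeB S 0 = {w : EuclideanSpace ℝ (Fin 2) | w 0 = 0 ∧ 0 ≤ w 1} := by
  have memS : ∀ x : EuclideanSpace ℝ (Fin 2), x ∈ S ↔ (x 0)^2 = (x 1)^3 := by
    intro x; rw [hS]; simp [sub_eq_zero]
  ext w
  constructor
  · rintro ⟨t, dk, htpos, ht0, hdk, hmem⟩
    have key : ∀ k, (dk k 0)^2 = t k * (dk k 1)^3 := by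
      intro k
      have h := (memS _).mp (hmem k)
      rw [coord2, coord2, zero_coord, zero_coord, zero_add, zero_add] at h
      have htk := htpos k
      have h2 : t k ^ 2 * (dk k 0 ^ 2) = t k ^ 2 * (t k * dk k 1 ^ 3) := by ring_nf; linear_combination h
      exact mul_left_cancel₀ (pow_ne_zero 2 (ne_of_gt htk)) h2
    have hd0 := tendsto_coord hdk 0
    have hd1 := tendsto_coord hdk 1
    constructor
    · have hL : Filter.Tendsto (fun k => (dk k 0)^2) Filter.atTop (nhds ((w 0)^2)) := hd0.pow 2
      have hR : Filter.Tendsto (fun k => t k * (dk k 1)^3) Filter.atTop (nhds (0 * (w 1)^3)) :=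
        ht0.mul (hd1.pow 3)
      have h := tendsto_nhds_unique hL (hR.congr (fun k => (key k).symm))
      have h' : (w 0)^2 = 0 := by rw [h]; ring
      exact pow_eq_zero_iff (by norm_num) |>.mp h'
    · have h1 : ∀ k, 0 ≤ dk k 1 := by
        intro k
        apply cube_nonneg
        have := key k
        have := htpos k
        nlinarith [sq_nonneg (dk k 0)]
      exact le_of_tendsto_of_tendsto' tendsto_const_nhds hd1 h1
  · rintro ⟨hw0, hw1⟩
    rcases eq_or_lt_of_le hw1 with hw1' | hw1'
    · have hw : w = 0 := by
        ext i
        fin_cases i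
        · simpa using hw0
        · simpa using hw1'.symm
      refine ⟨fun k => 1/((k:ℝ)+1), fun _ => 0, fun k => invseq_pos k, invseq_tendsto,
        by rw [hw]; exact tendsto_const_nhds, ?_⟩
      intro k
      rw [memS]
      rw [coord2, coord2, zero_coord, zero_coord, zero_add]
      simp [zero_coord]
    · refine ⟨fun k => (1/((k:ℝ)+1))^2 / w 1, fun k => !₂[w 1 * (1/((k:ℝ)+1)), w 1], ?_, ?_, ?_, ?_⟩
      · intro k; positivity
      · have : Filter.Tendsto (fun k : ℕ => (1/((k:ℝ)+1))^2 / w 1) Filter.atTop (nhds (0^2 / w 1)) :=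
          (invseq_tendsto.pow 2).div_const _
        simpa using this
      · have hmul : Filter.Tendsto (fun k : ℕ => w 1 * (1/((k:ℝ)+1))) Filter.atTop (nhds (w 1 * 0)) :=
          (tendsto_const_nhds : Filter.Tendsto (fun _ : ℕ => w 1) Filter.atTop (nhds (w 1))).mul invseq_tendsto
        have := tendsto_pair (hmul) (tendsto_const_nhds (x := w 1))
        have heq : (!₂[w 1 * 0, w 1] : EuclideanSpace ℝ (Fin 2)) = w := by
          ext i
          fin_cases i
          · simp [pair0, hw0]
          · rfl
        exact heq ▸ this
      · intro k
        rw [memS]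
        rw [coord2, coord2, zero_coord, zero_coord, zero_add, zero_add]
        simp only [pair0, pair1, Matrix.cons_val_zero, Matrix.cons_val_one]
        have hne : w 1 ≠ 0 := ne_of_gt hw1'
        field_simp
lemma part2 (S : Set (EuclideanSpace ℝ (Fin 2)))
    (hS : S = {x : EuclideanSpace ℝ (Fin 2) | (x 0) ^ 2 - (x 1) ^ 3 = 0})
    (d : EuclideanSpace ℝ (Fin 2)) (hd0 : d 0 = 0) (hd1 : d 1 = 1) :
    asympTangent S 0 d = Set.univ := by
  have memS : ∀ x : EuclideanSpace ℝ (Fin 2), x ∈ S ↔ (x 0)^2 = (x 1)^3 := by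
    intro x; rw [hS]; simp [sub_eq_zero]
  ext w
  simp only [Set.mem_univ, iff_true]
  set b := w 1 with hb
  set r : ℕ → ℝ := fun k => 1/(((k:ℝ)+1)*(1+|b|)) with hr
  have hrpos : ∀ k, 0 < r k := by intro k; rw [hr]; positivity
  have hrlim : Filter.Tendsto r Filter.atTop (nhds 0) := by
    rw [hr]
    have heq : (fun k : ℕ => 1/(((k:ℝ)+1)*(1+|b|))) = fun k : ℕ => (1/((k:ℝ)+1)) * (1/(1+|b|)) := by
      funext k
      exact (one_div_mul_one_div _ _).symm
    rw [heq]
    simpa using invseq_tendsto.mul_const (1/(1+|b|))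
  have hr1 : ∀ k, r k * (1 + |b|) ≤ 1 := by
    intro k
    have hpos : (0:ℝ) < 1 + |b| := by positivity
    have : r k * (1 + |b|) = 1/((k:ℝ)+1) := by
      rw [hr]
      field_simp
    rw [this]
    rw [div_le_one (by positivity)]
    simp
  have hDpos : ∀ k, (0:ℝ) < 1 + 1/2 * r k * b := by
    intro k
    have h1 := hr1 k
    have h2 := hrpos k
    have h3 : r k * -|b| ≤ r k * b := mul_le_mul_of_nonneg_left (neg_abs_le b) (le_of_lt h2)
    nlinarith [abs_nonneg b]
  obtain ⟨a, hane, halim⟩ : ∃ a : ℕ → ℝ, (∀ k, a k ≠ 0) ∧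
      Filter.Tendsto a Filter.atTop (nhds (w 0)) := by
    by_cases hw0 : w 0 = 0
    · exact ⟨r, fun k => ne_of_gt (hrpos k), hw0 ▸ hrlim⟩
    · exact ⟨fun _ => w 0, fun _ => hw0, tendsto_const_nhds⟩
  set t : ℕ → ℝ := fun k => (1/4 * r k^2 * a k^2) / (1 + 1/2 * r k * b)^3 with ht
  have hasq : ∀ k, 0 < a k ^ 2 := by
    intro k
    rcases (hane k).lt_or_gt with h | h <;> nlinarith
  have htpos : ∀ k, 0 < t k := by
    intro k
    rw [ht]
    exact div_pos (mul_pos (mul_pos (by norm_num) (pow_pos (hrpos k) 2)) (hasq k))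
      (pow_pos (hDpos k) 3)
  have hD1 : Filter.Tendsto (fun k => 1 + 1/2 * r k * b) Filter.atTop (nhds 1) := by
    have : Filter.Tendsto (fun k => 1 + 1/2 * r k * b) Filter.atTop (nhds (1 + 1/2 * 0 * b)) :=
      tendsto_const_nhds.add (((tendsto_const_nhds (x := (1/2:ℝ))).mul hrlim).mul_const b)
    simpa using this
  have htlim : Filter.Tendsto t Filter.atTop (nhds 0) := by
    rw [ht]
    have hnum : Filter.Tendsto (fun k => 1/4 * r k^2 * a k^2) Filter.atTop
        (nhds (1/4 * 0^2 * (w 0)^2)) :=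
      ((tendsto_const_nhds (x := (1/4:ℝ))).mul (hrlim.pow 2)).mul (halim.pow 2)
    have hdv := hnum.div (hD1.pow 3) (by norm_num)
    rw [show (0:ℝ) = (1/4 * 0^2 * (w 0)^2) / (1:ℝ)^3 by norm_num]
    exact hdv
  have htrlim : Filter.Tendsto (fun k => t k / r k) Filter.atTop (nhds 0) := by
    have heq : ∀ k, t k / r k = (1/4 * r k * a k^2) / (1 + 1/2 * r k * b)^3 := by
      intro k
      have h1 : r k ≠ 0 := ne_of_gt (hrpos k)
      have e : t k = (1/4 * r k * a k^2) / (1 + 1/2 * r k * b)^3 * r k := by rw [ht]; ring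
      rw [e, mul_div_assoc, div_self h1, mul_one]
    have hnum : Filter.Tendsto (fun k => 1/4 * r k * a k^2) Filter.atTop
        (nhds (1/4 * 0 * (w 0)^2)) :=
      ((tendsto_const_nhds (x := (1/4:ℝ))).mul hrlim).mul (halim.pow 2)
    have hdv := hnum.div (hD1.pow 3) (by norm_num)
    apply Filter.Tendsto.congr (fun k => (heq k).symm)
    rw [show (0:ℝ) = (1/4 * 0 * (w 0)^2) / (1:ℝ)^3 by norm_num]
    exact hdv
  refine ⟨t, r, fun k => !₂[a k, b], htpos, hrpos, htlim, hrlim, htrlim, ?_, ?_⟩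
  · have := tendsto_pair halim (tendsto_const_nhds (x := b))
    have heq : (!₂[w 0, b] : EuclideanSpace ℝ (Fin 2)) = w := by
      rw [hb]; exact (vec_eq_pair w).symm
    exact heq ▸ this
  · intro k
    rw [memS]
    rw [coord3, coord3, zero_coord, zero_coord, hd0, hd1]
    simp only [pair0, pair1, Matrix.cons_val_zero, Matrix.cons_val_one]
    have hD : (1 + 1/2 * r k * b) ≠ 0 := ne_of_gt (hDpos k)
    have htD : t k * (1 + 1/2 * r k * b)^3 = 1/4 * r k^2 * a k^2 := by
      rw [ht]
      exact div_mul_cancel₀ _ (pow_ne_zero 3 hD)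
    linear_combination (- t k^2) * htD
lemma part3 (S : Set (EuclideanSpace ℝ (Fin 2)))
    (hS : S = {x : EuclideanSpace ℝ (Fin 2) | (x 0) ^ 2 - (x 1) ^ 3 = 0})
    (d : EuclideanSpace ℝ (Fin 2)) (hd0 : d 0 = 0) (hd1 : d 1 = 1) :
    secondTangent S 0 d = ∅ := by
  have memS : ∀ x : EuclideanSpace ℝ (Fin 2), x ∈ S ↔ (x 0)^2 = (x 1)^3 := by
    intro x; rw [hS]; simp [sub_eq_zero]
  rw [Set.eq_empty_iff_forall_notMem]
  rintro w ⟨t, wk, htpos, htlim, hwklim, hmem⟩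
  have key : ∀ k, 1/4 * t k * (wk k 0)^2 = (1 + 1/2 * t k * wk k 1)^3 := by
    intro k
    have h := (memS _).mp (hmem k)
    rw [coord3, coord3, zero_coord, zero_coord, hd0, hd1] at h
    have h3 : t k^3 * (1/4 * t k * (wk k 0)^2) = t k^3 * ((1 + 1/2 * t k * wk k 1)^3) := by
      linear_combination h
    exact mul_left_cancel₀ (pow_ne_zero 3 (ne_of_gt (htpos k))) h3
  have hL : Filter.Tendsto (fun k => 1/4 * t k * (wk k 0)^2) Filter.atTop
      (nhds (1/4 * 0 * (w 0)^2)) :=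
    ((tendsto_const_nhds (x := (1/4:ℝ))).mul htlim).mul ((tendsto_coord hwklim 0).pow 2)
  have hR : Filter.Tendsto (fun k => (1 + 1/2 * t k * wk k 1)^3) Filter.atTop
      (nhds ((1 + 1/2 * 0 * (w 1))^3)) :=
    (tendsto_const_nhds.add (((tendsto_const_nhds (x := (1/2:ℝ))).mul htlim).mul
      (tendsto_coord hwklim 1))).pow 3
  have := tendsto_nhds_unique hL (hR.congr (fun k => (key k).symm))
  norm_num at this
lemma frechet_univ (x v : EuclideanSpace ℝ (Fin 2))
    (h : v ∈ frechetNormal (Set.univ : Set (EuclideanSpace ℝ (Fin 2))) x) : v = 0 := by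
  obtain ⟨-, hv⟩ := h
  by_contra hne
  have hnv : 0 < ‖v‖ := norm_pos_iff.mpr hne
  obtain ⟨δ, hδ, hcond⟩ := hv (‖v‖/2) (by positivity)
  set y := x + (δ/2 * ‖v‖⁻¹) • v with hy
  have hyx : y - x = (δ/2 * ‖v‖⁻¹) • v := by rw [hy]; abel
  have hnorm : ‖y - x‖ = δ/2 := by
    rw [hyx, norm_smul]
    rw [Real.norm_eq_abs, abs_of_pos (by positivity)]
    field_simp
  have h1 := hcond y (Set.mem_univ y) (by rw [hnorm]; linarith)
  rw [hnorm, hyx, real_inner_smul_right, real_inner_self_eq_norm_sq] at h1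
  have e : δ/2 * ‖v‖⁻¹ * ‖v‖^2 = δ/2 * ‖v‖ := by field_simp
  rw [e] at h1
  nlinarith
lemma part4 (w : EuclideanSpace ℝ (Fin 2)) :
    limitingNormal (Set.univ : Set (EuclideanSpace ℝ (Fin 2))) w = {0} := by
  ext v
  simp only [Set.mem_singleton_iff]
  constructor
  · rintro ⟨xk, vk, hxk, hvk, hmem⟩
    have h0 : Filter.Tendsto vk Filter.atTop (nhds 0) :=
      tendsto_const_nhds.congr (fun k => (frechet_univ _ _ (hmem k)).symm)
    exact tendsto_nhds_unique hvk h0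
  · rintro rfl
    refine ⟨fun _ => w, fun _ => 0, tendsto_const_nhds, tendsto_const_nhds, fun k => ?_⟩
    refine ⟨Set.mem_univ _, fun ε hε => ⟨1, by norm_num, fun y _ _ => ?_⟩⟩
    rw [inner_zero_left]
    positivity
set_option maxHeartbeats 1000000 in
lemma frechet_at_param (S : Set (EuclideanSpace ℝ (Fin 2)))
    (hS : S = {x : EuclideanSpace ℝ (Fin 2) | (x 0) ^ 2 - (x 1) ^ 3 = 0})
    (s a : ℝ) (hs : 0 < s) (p : EuclideanSpace ℝ (Fin 2))
    (hp0 : p 0 = s^3) (hp1 : p 1 = s^2) :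
    (!₂[a, -(3/2) * s * a] : EuclideanSpace ℝ (Fin 2)) ∈ frechetNormal S p := by
  have memS : ∀ x : EuclideanSpace ℝ (Fin 2), x ∈ S ↔ (x 0)^2 = (x 1)^3 := by
    intro x; rw [hS]; simp [sub_eq_zero]
  constructor
  · rw [memS, hp0, hp1]; ring
  · intro ε hε
    refine ⟨min (s^3) (ε * s / (|a| + 1)), by positivity, ?_⟩
    intro y hy hlt
    obtain ⟨u, hu0, hu1⟩ := param ((memS y).mp hy)
    have hab : (0:ℝ) < |a| + 1 := by positivity
    have hc0 : |u^3 - s^3| ≤ ‖y - p‖ := by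
      have := abs_coord_le (y - p) 0
      rwa [coord_sub, hu0, hp0] at this
    have hc1 : |u^2 - s^2| ≤ ‖y - p‖ := by
      have := abs_coord_le (y - p) 1
      rwa [coord_sub, hu1, hp1] at this
    have hδ1 : ‖y - p‖ < s^3 := lt_of_lt_of_le hlt (min_le_left _ _)
    have hδ2 : ‖y - p‖ < ε * s / (|a| + 1) := lt_of_lt_of_le hlt (min_le_right _ _)
    have hupos : 0 < u := by
      by_contra hu
      push_neg at hu
      have hu3 : u^3 ≤ 0 := Odd.pow_nonpos ⟨1, by norm_num⟩ hu
      have : |u^3 - s^3| = s^3 - u^3 := by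
        rw [abs_of_nonpos (by nlinarith)]
        ring
      nlinarith
    have hus : |u - s| * s ≤ |u^2 - s^2| := by
      have he : |u^2 - s^2| = |u - s| * (u + s) := by
        rw [show u^2 - s^2 = (u - s) * (u + s) by ring, abs_mul,
          abs_of_pos (by linarith : (0:ℝ) < u + s)]
      rw [he]
      have := abs_nonneg (u - s)
      nlinarith
    have husb : |u - s| < ε / (|a| + 1) := by
      have h1 : |u - s| * s < ε * s / (|a| + 1) := lt_of_le_of_lt (le_trans hus hc1) hδ2
      have h2 : ε * s / (|a| + 1) = (ε / (|a| + 1)) * s := by ring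
      rw [h2] at h1
      exact lt_of_mul_lt_mul_right h1 hs.le
    -- inner product
    rw [inner_two, coord_sub, coord_sub, hu0, hu1, hp0, hp1]
    simp only [pair0, pair1, Matrix.cons_val_zero, Matrix.cons_val_one]
    have habs2 : |u^2 - s^2| = |u - s| * (u + s) := by
      rw [show u^2 - s^2 = (u - s) * (u + s) by ring, abs_mul,
        abs_of_pos (by linarith : (0:ℝ) < u + s)]
    have step1 : a * (u^3 - s^3) + -(3/2) * s * a * (u^2 - s^2) ≤
        |a| * (|u - s| * |u^2 - s^2|) := by
      rw [habs2, show a * (u^3 - s^3) + -(3/2) * s * a * (u^2 - s^2)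
        = a * (u - s)^2 * (u + s/2) by ring]
      have h0 : a * (u - s)^2 ≤ |a| * (u - s)^2 :=
        mul_le_mul_of_nonneg_right (le_abs_self a) (sq_nonneg (u - s))
      have h1 : a * (u - s)^2 * (u + s/2) ≤ |a| * (u - s)^2 * (u + s) := by
        nlinarith [mul_le_mul_of_nonneg_right h0 (by linarith : (0:ℝ) ≤ u + s/2),
          mul_nonneg (mul_nonneg (abs_nonneg a) (sq_nonneg (u - s))) (by linarith : (0:ℝ) ≤ s/2)]
      have h2 : |a| * (u - s)^2 * (u + s) = |a| * (|u - s| * (|u - s| * (u + s))) := by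
        rw [← sq_abs (u - s)]
        ring
      linarith [h2 ▸ h1]
    have step2 : |a| * (|u - s| * |u^2 - s^2|) ≤ |a| * ((ε / (|a| + 1)) * ‖y - p‖) := by
      apply mul_le_mul_of_nonneg_left _ (abs_nonneg a)
      apply mul_le_mul (le_of_lt husb) hc1 (abs_nonneg _) (by positivity)
    have step3 : |a| * ((ε / (|a| + 1)) * ‖y - p‖) ≤ ε * ‖y - p‖ := by
      have h5 : |a| * (ε / (|a| + 1)) ≤ ε := by
        rw [mul_div_assoc', div_le_iff₀ hab]
        nlinarith [abs_nonneg a]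
      have := mul_le_mul_of_nonneg_right h5 (norm_nonneg (y - p))
      linarith [this, mul_assoc |a| (ε / (|a| + 1)) ‖y - p‖]
    linarith
set_option maxHeartbeats 1000000 in
lemma frechet_constraint (S : Set (EuclideanSpace ℝ (Fin 2)))
    (hS : S = {x : EuclideanSpace ℝ (Fin 2) | (x 0) ^ 2 - (x 1) ^ 3 = 0})
    (u : ℝ) (hu : u ≠ 0) (p : EuclideanSpace ℝ (Fin 2))
    (hp0 : p 0 = u^3) (hp1 : p 1 = u^2) (v : EuclideanSpace ℝ (Fin 2))
    (hv : v ∈ frechetNormal S p) :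
    v 1 = -(3/2) * u * v 0 := by
  have memS : ∀ x : EuclideanSpace ℝ (Fin 2), x ∈ S ↔ (x 0)^2 = (x 1)^3 := by
    intro x; rw [hS]; simp [sub_eq_zero]
  obtain ⟨-, hfre⟩ := hv
  suffices hc0 : 3*u^2 * v 0 + 2*u * v 1 = 0 by
    have h2u : (2*u) ≠ 0 := mul_ne_zero two_ne_zero hu
    apply mul_left_cancel₀ h2u
    linear_combination hc0
  by_contra hc
  set c : ℝ := 3*u^2 * v 0 + 2*u * v 1 with hcdef
  clear_value c
  obtain ⟨σ, hσ1, hσc⟩ : ∃ σ : ℝ, |σ| = 1 ∧ σ * c = |c| := by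
    rcases lt_trichotomy c 0 with h | h | h
    · exact ⟨-1, by norm_num, by rw [abs_of_neg h]; ring⟩
    · exact absurd h hc
    · exact ⟨1, by norm_num, by rw [abs_of_pos h]; ring⟩
  have hσsq : σ^2 = 1 := by
    rw [← sq_abs σ, hσ1]; norm_num
  have hcpos : 0 < |c| := abs_pos.mpr hc
  set K : ℝ := |v 0| * (3*|u| + 1) + |v 1| with hKdef
  clear_value K
  have hK0 : 0 ≤ K := by rw [hKdef]; positivity
  set M : ℝ := 3*(|u| + 1)^2 + 2*(|u| + 1) with hMdef
  clear_value M
  have hM0 : (0:ℝ) < M := by rw [hMdef]; positivity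
  obtain ⟨δ, hδ, hcond⟩ := hfre (|c| / (4*M)) (by positivity)
  set h : ℝ := min 1 (min (δ/(2*M)) (|c|/(2*K+1))) with hhdef
  clear_value h
  have hh0 : 0 < h := by
    rw [hhdef]
    apply lt_min (by norm_num)
    exact lt_min (by positivity) (by positivity)
  have hh1 : h ≤ 1 := by rw [hhdef]; exact min_le_left _ _
  have hh2 : h ≤ δ/(2*M) := by
    rw [hhdef]; exact le_trans (min_le_right _ _) (min_le_left _ _)
  have hh3 : h ≤ |c|/(2*K+1) := by
    rw [hhdef]; exact le_trans (min_le_right _ _) (min_le_right _ _)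
  set w : ℝ := u + σ*h with hwdef
  clear_value w
  set y : EuclideanSpace ℝ (Fin 2) := !₂[w^3, w^2] with hydef
  clear_value y
  have hyS : y ∈ S := by rw [memS, hydef]; simp only [pair0, pair1, Matrix.cons_val_zero, Matrix.cons_val_one]; ring
  have hy0 : y 0 - p 0 = w^3 - u^3 := by rw [hydef, hp0, pair0]
  have hy1 : y 1 - p 1 = w^2 - u^2 := by rw [hydef, hp1, pair1]
  have habsσh : |σ*h| = h := by
    rw [abs_mul, hσ1, one_mul, abs_of_pos hh0]
  have habsw : |w| ≤ |u| + 1 := by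
    calc |w| = |u + σ*h| := by rw [hwdef]
    _ ≤ |u| + |σ*h| := abs_add_le _ _
    _ ≤ |u| + 1 := by rw [habsσh]; linarith
  -- bound ‖y - p‖ ≤ h * M
  have hb3 : |w^3 - u^3| ≤ h * (3*(|u| + 1)^2) := by
    have he : w^3 - u^3 = (σ*h) * (w^2 + w*u + u^2) := by rw [hwdef]; ring
    rw [he, abs_mul, habsσh]
    apply mul_le_mul_of_nonneg_left _ (le_of_lt hh0)
    calc |w^2 + w*u + u^2| ≤ |w^2 + w*u| + |u^2| := abs_add_le _ _
      _ ≤ |w^2| + |w*u| + |u^2| := by linarith [abs_add_le (w^2) (w*u)]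
      _ = |w| ^ 2 + |w| * |u| + |u| ^ 2 := by rw [abs_mul, ← pow_abs, ← pow_abs]
      _ ≤ 3*(|u| + 1)^2 := by
          nlinarith [abs_nonneg w, abs_nonneg u, habsw,
            mul_le_mul habsw habsw (abs_nonneg w) (by positivity),
            mul_le_mul_of_nonneg_right habsw (abs_nonneg u)]
  have hb2 : |w^2 - u^2| ≤ h * (2*(|u| + 1)) := by
    have he : w^2 - u^2 = (σ*h) * (w + u) := by rw [hwdef]; ring
    rw [he, abs_mul, habsσh]
    apply mul_le_mul_of_nonneg_left _ (le_of_lt hh0)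
    calc |w + u| ≤ |w| + |u| := abs_add_le _ _
      _ ≤ 2*(|u| + 1) := by linarith [habsw, abs_nonneg u]
  have hnorm : ‖y - p‖ ≤ h * M := by
    calc ‖y - p‖ ≤ |(y - p) 0| + |(y - p) 1| := norm_le_two _
      _ = |w^3 - u^3| + |w^2 - u^2| := by rw [coord_sub, coord_sub, hy0, hy1]
      _ ≤ h * (3*(|u| + 1)^2) + h * (2*(|u| + 1)) := by linarith
      _ = h * M := by rw [hMdef]; ring
  have hlt : ‖y - p‖ < δ := by
    have : h * M ≤ δ/2 := by
      have := mul_le_mul_of_nonneg_right hh2 (le_of_lt hM0)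
      calc h * M ≤ (δ/(2*M)) * M := this
        _ = δ/2 := by field_simp
    linarith
  have hfr := hcond y hyS hlt
  -- compute inner product
  have hinner : ⟪v, y - p⟫ = h * (|c| + h * (v 0 * (w + 2*u) + v 1)) := by
    rw [inner_two, coord_sub, coord_sub, hy0, hy1]
    rw [show v 0 * (w^3 - u^3) + v 1 * (w^2 - u^2)
      = (σ*h) * ((3*u^2*v 0 + 2*u*v 1)) + (σ^2)*(h^2) * (v 0 * (w + 2*u) + v 1) by
        rw [hwdef]; ring]
    rw [hσsq, ← hcdef, show (σ*h) * c = h * (σ * c) by ring, hσc]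
    ring
  -- bound g
  have hg : |v 0 * (w + 2*u) + v 1| ≤ K := by
    calc |v 0 * (w + 2*u) + v 1| ≤ |v 0 * (w + 2*u)| + |v 1| := abs_add_le _ _
      _ = |v 0| * |w + 2*u| + |v 1| := by rw [abs_mul]
      _ ≤ |v 0| * (3*|u| + 1) + |v 1| := by
          have hw2u : |w + 2*u| ≤ 3*|u| + 1 := by
            calc |w + 2*u| ≤ |w| + |2*u| := abs_add_le _ _
              _ = |w| + 2*|u| := by rw [abs_mul]; norm_num
              _ ≤ 3*|u| + 1 := by linarith [habsw]
          nlinarith [abs_nonneg (v 0), hw2u]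
      _ = K := by rw [hKdef]
  -- lower bound for inner product
  have hlow : h * (|c|/2) ≤ ⟪v, y - p⟫ := by
    rw [hinner]
    have h1 : h * K ≤ |c|/2 := by
      have := mul_le_mul_of_nonneg_right hh3 hK0
      calc h * K ≤ (|c|/(2*K+1)) * K := this
        _ ≤ |c|/2 := by
            rw [div_mul_eq_mul_div, div_le_div_iff₀ (by positivity) (by norm_num)]
            nlinarith
    have h2 : -(h*K) ≤ h * (v 0 * (w + 2*u) + v 1) := by
      have := neg_abs_le (v 0 * (w + 2*u) + v 1)
      nlinarith [le_of_lt hh0]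
    nlinarith [le_of_lt hh0]
  -- upper bound from Fréchet condition
  have hup : ⟪v, y - p⟫ ≤ h * (|c|/4) := by
    calc ⟪v, y - p⟫ ≤ (|c|/(4*M)) * ‖y - p‖ := hfr
      _ ≤ (|c|/(4*M)) * (h * M) := by
          apply mul_le_mul_of_nonneg_left hnorm (by positivity)
      _ = h * (|c|/4) := by field_simp
  nlinarith [hh0, hcpos]
set_option maxHeartbeats 1000000 in
lemma part5 (S : Set (EuclideanSpace ℝ (Fin 2)))
    (hS : S = {x : EuclideanSpace ℝ (Fin 2) | (x 0) ^ 2 - (x 1) ^ 3 = 0})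
    (d : EuclideanSpace ℝ (Fin 2)) (hd0 : d 0 = 0) (hd1 : d 1 = 1) :
    dirLimitingNormal S 0 d = {v : EuclideanSpace ℝ (Fin 2) | v 1 = 0} := by
  have memS : ∀ x : EuclideanSpace ℝ (Fin 2), x ∈ S ↔ (x 0)^2 = (x 1)^3 := by
    intro x; rw [hS]; simp [sub_eq_zero]
  ext v
  simp only [Set.mem_setOf_eq]
  constructor
  · rintro ⟨t, dk, vk, htpos, htlim, hdklim, hvklim, hmem⟩
    have hd1k : Filter.Tendsto (fun k => dk k 1) Filter.atTop (nhds 1) := by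
      have := tendsto_coord hdklim 1
      rwa [hd1] at this
    have hev : ∀ᶠ k in Filter.atTop, 0 < dk k 1 :=
      hd1k.eventually (eventually_gt_nhds (by norm_num))
    set u : ℕ → ℝ := fun k => (t k * dk k 0) / (t k * dk k 1) with hudef
    have hkey : ∀ᶠ k in Filter.atTop,
        vk k 1 = -(3/2) * u k * vk k 0 ∧ (u k)^2 = t k * dk k 1 := by
      refine hev.mono (fun k hk => ?_)
      have hp1pos : 0 < t k * dk k 1 := mul_pos (htpos k) hk
      have hpmem := (hmem k).1
      have hp0 : ((0 : EuclideanSpace ℝ (Fin 2)) + t k • dk k) 0 = t k * dk k 0 := by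
        rw [coord2, zero_coord, zero_add]
      have hp1 : ((0 : EuclideanSpace ℝ (Fin 2)) + t k • dk k) 1 = t k * dk k 1 := by
        rw [coord2, zero_coord, zero_add]
      have hsq : (t k * dk k 0)^2 = (t k * dk k 1)^3 := by
        have := (memS _).mp hpmem
        rwa [hp0, hp1] at this
      obtain ⟨he0, he1⟩ := param' hsq (ne_of_gt hp1pos)
      have hu2 : (u k)^2 = t k * dk k 1 := by rw [hudef]; exact he1.symm
      have hune : u k ≠ 0 := by
        intro h0
        rw [h0] at hu2
        simp at hu2
        nlinarith
      have hcon := frechet_constraint S hS (u k) hune _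
        (by rw [hp0]; exact he0) (by rw [hp1]; exact he1) (vk k) (hmem k)
      exact ⟨hcon, hu2⟩
    have husq : Filter.Tendsto (fun k => (u k)^2) Filter.atTop (nhds 0) := by
      have hbase : Filter.Tendsto (fun k => t k * dk k 1) Filter.atTop (nhds (0 * 1)) :=
        htlim.mul hd1k
      rw [zero_mul] at hbase
      exact hbase.congr' (hkey.mono (fun k hk => hk.2.symm))
    have hulim := tendsto_of_sq husq
    have hv1 : Filter.Tendsto (fun k => vk k 1) Filter.atTop (nhds (v 1)) :=
      tendsto_coord hvklim 1
    have hv1' : Filter.Tendsto (fun k => vk k 1) Filter.atTop (nhds 0) := by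
      have hbase : Filter.Tendsto (fun k => -(3/2) * u k * vk k 0) Filter.atTop
          (nhds (-(3/2) * 0 * (v 0))) :=
        ((tendsto_const_nhds (x := (-(3/2):ℝ))).mul hulim).mul (tendsto_coord hvklim 0)
      rw [show -(3/2) * (0:ℝ) * (v 0) = 0 by ring] at hbase
      exact hbase.congr' (hkey.mono (fun k hk => hk.1.symm))
    exact tendsto_nhds_unique hv1 hv1'
  · intro hv1
    refine ⟨fun k => (1/((k:ℝ)+1))^2, fun k => !₂[1/((k:ℝ)+1), 1],
      fun k => !₂[v 0, -(3/2) * (1/((k:ℝ)+1)) * v 0], fun k => by positivity, ?_, ?_, ?_, ?_⟩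
    · have := invseq_tendsto.pow 2
      rw [show (0:ℝ)^2 = 0 by ring] at this
      exact this
    · have hlim := tendsto_pair invseq_tendsto (tendsto_const_nhds (x := (1:ℝ)))
      have heq : (!₂[(0:ℝ), 1] : EuclideanSpace ℝ (Fin 2)) = d := by
        ext i
        fin_cases i
        · exact hd0.symm
        · exact hd1.symm
      exact heq ▸ hlim
    · have hsec : Filter.Tendsto (fun k : ℕ => -(3/2) * (1/((k:ℝ)+1)) * v 0) Filter.atTop
          (nhds (-(3/2) * 0 * v 0)) :=
        ((tendsto_const_nhds (x := (-(3/2):ℝ))).mul invseq_tendsto).mul_const (v 0)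
      have hlim := tendsto_pair (tendsto_const_nhds (x := v 0)) hsec
      have heq : (!₂[v 0, -(3/2) * 0 * v 0] : EuclideanSpace ℝ (Fin 2)) = v := by
        ext i
        fin_cases i
        · rfl
        · show -(3/2) * 0 * v 0 = v 1
          rw [hv1]; ring
      exact heq ▸ hlim
    · intro k
      set m : EuclideanSpace ℝ (Fin 2) := !₂[1/((k:ℝ)+1), 1] with hm
      have hm0 : m 0 = 1/((k:ℝ)+1) := rfl
      have hm1 : m 1 = 1 := rfl
      have hp0 : ((0 : EuclideanSpace ℝ (Fin 2)) + ((1/((k:ℝ)+1))^2) • m) 0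
          = (1/((k:ℝ)+1))^3 := by
        rw [coord2, zero_coord, hm0]
        ring
      have hp1 : ((0 : EuclideanSpace ℝ (Fin 2)) + ((1/((k:ℝ)+1))^2) • m) 1
          = (1/((k:ℝ)+1))^2 := by
        rw [coord2, zero_coord, hm1]
        ring
      exact frechet_at_param S hS (1/((k:ℝ)+1)) (v 0) (invseq_pos k) _ hp0 hp1
theorem stmt7 (S : Set (EuclideanSpace ℝ (Fin 2)))
    (hS : S = {x : EuclideanSpace ℝ (Fin 2) | (x 0) ^ 2 - (x 1) ^ 3 = 0})
    (xb d : EuclideanSpace ℝ (Fin 2)) (hxb : xb = 0)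
    (hd0 : d 0 = 0) (hd1 : d 1 = 1) :
    tangentConeB S xb = {w : EuclideanSpace ℝ (Fin 2) | w 0 = 0 ∧ 0 ≤ w 1} ∧
    asympTangent S xb d = Set.univ ∧
    secondTangent S xb d = ∅ ∧
    (∀ w : EuclideanSpace ℝ (Fin 2), limitingNormal (asympTangent S xb d) w = {0}) ∧
    dirLimitingNormal S xb d = {v : EuclideanSpace ℝ (Fin 2) | v 1 = 0} := by
  subst hxb
  refine ⟨part1 S hS, part2 S hS d hd0 hd1, part3 S hS d hd0 hd1, ?_, part5 S hS d hd0 hd1⟩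
  intro w
  rw [part2 S hS d hd0 hd1]
  exact part4 w
end
end

section
/- Let g : ℝⁿ → ℝᵐ be twice continuously differentiable, K ⊆ ℝᵐ closed, C = g⁻¹(K), x̄ ∈ C, and d ∈ T_C(x̄). Then T''_C(x̄; d) ⊆ {w ∈ ℝⁿ : ∇g(x̄)w ∈ T''_K(g(x̄); ∇g(x̄)d)}. -/
open Filter Topology Set
open scoped RealInnerProductSpace

noncomputable section

variable {E : Type*} [NormedAddCommGroup E] [InnerProductSpace ℝ E]

open Metric in
private theorem quadbound {n m : ℕ} (g : EuclideanSpace ℝ (Fin n) → EuclideanSpace ℝ (Fin m))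
    (hg : ContDiff ℝ 2 g) (xb : EuclideanSpace ℝ (Fin n)) :
    ∃ L : ℝ, 0 ≤ L ∧ ∃ ε > (0:ℝ), ∀ y, ‖y - xb‖ ≤ ε →
      ‖g y - g xb - fderiv ℝ g xb (y - xb)‖ ≤ L * ‖y - xb‖ ^ 2 := by
  have hg1 : ContDiffAt ℝ 1 (fderiv ℝ g) xb :=
    (hg.fderiv_right (by norm_num)).contDiffAt
  obtain ⟨L, t, ht, hlip⟩ := hg1.exists_lipschitzOnWith
  obtain ⟨ε, hε, hball⟩ := Metric.nhds_basis_closedBall.mem_iff.mp ht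
  refine ⟨L, L.coe_nonneg, ε, hε, fun y hy => ?_⟩
  have hdiff : Differentiable ℝ g := hg.differentiable (by norm_num)
  have hxbt : xb ∈ t := hball (Metric.mem_closedBall_self hε.le)
  have key := Convex.norm_image_sub_le_of_norm_fderiv_le'
    (s := closedBall xb ‖y - xb‖) (f := g) (φ := fderiv ℝ g xb) (C := L * ‖y - xb‖)
    (fun u _ => hdiff.differentiableAt)
    (fun u hu => by
      have h1 : ‖u - xb‖ ≤ ‖y - xb‖ := by
        simpa [Metric.mem_closedBall, dist_eq_norm] using hu
      have hu' : u ∈ t := hball (Metric.mem_closedBall.2 (by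
        rw [dist_eq_norm]; exact h1.trans hy))
      calc ‖fderiv ℝ g u - fderiv ℝ g xb‖ = dist (fderiv ℝ g u) (fderiv ℝ g xb) := by
            rw [dist_eq_norm]
        _ ≤ L * dist u xb := hlip.dist_le_mul u hu' xb hxbt
        _ ≤ L * ‖y - xb‖ := by
            rw [dist_eq_norm]; exact mul_le_mul_of_nonneg_left h1 L.coe_nonneg)
    (convex_closedBall _ _) (Metric.mem_closedBall_self (norm_nonneg _))
    (Metric.mem_closedBall.2 (by rw [dist_eq_norm]))
  calc ‖g y - g xb - fderiv ℝ g xb (y - xb)‖ ≤ L * ‖y - xb‖ * ‖y - xb‖ := key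
    _ = L * ‖y - xb‖^2 := by ring

theorem stmt8 {n m : ℕ} (g : EuclideanSpace ℝ (Fin n) → EuclideanSpace ℝ (Fin m))
    (hg : ContDiff ℝ 2 g) (K : Set (EuclideanSpace ℝ (Fin m))) (hK : IsClosed K)
    (xb : EuclideanSpace ℝ (Fin n)) (hxb : xb ∈ g ⁻¹' K)
    (d : EuclideanSpace ℝ (Fin n)) (hd : d ∈ tangentConeB (g ⁻¹' K) xb) :
    asympTangent (g ⁻¹' K) xb d ⊆
      {w | fderiv ℝ g xb w ∈ asympTangent K (g xb) (fderiv ℝ g xb d)} := by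
  rintro w ⟨t, r, wk, ht, hr, htt, hrt, htr, hwk, hmem⟩
  set A := fderiv ℝ g xb with hA
  obtain ⟨L, hL, ε, hε, hquad⟩ := quadbound g hg xb
  set u : ℕ → EuclideanSpace ℝ (Fin n) :=
    fun k => t k • d + ((1/2 : ℝ) * t k * r k) • wk k with hu
  have hu0 : Tendsto u atTop (nhds 0) := by
    rw [hu]
    have h1 : Tendsto (fun k => t k • d) atTop (nhds ((0:ℝ) • d)) :=
      htt.smul_const d
    have h2 : Tendsto (fun k => ((1/2 : ℝ) * t k * r k) • wk k) atTop
        (nhds ((0:ℝ) • w)) := by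
      apply Tendsto.smul _ hwk
      have := (htt.const_mul (1/2 : ℝ)).mul hrt
      simpa using this
    simpa using h1.add h2
  set vk : ℕ → EuclideanSpace ℝ (Fin m) :=
    fun k => A (wk k) + ((1/2 : ℝ) * t k * r k)⁻¹ • (g (xb + u k) - g xb - A (u k))
    with hvk
  have htrpos : ∀ k, 0 < (1/2 : ℝ) * t k * r k := fun k => by
    nlinarith [mul_pos (ht k) (hr k)]
  refine ⟨t, r, vk, ht, hr, htt, hrt, htr, ?_, ?_⟩
  · -- convergence of vk to A w
    have hAw : Tendsto (fun k => A (wk k)) atTop (nhds (A w)) :=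
      (A.continuous.tendsto w).comp hwk
    have herr : Tendsto (fun k => ((1/2 : ℝ) * t k * r k)⁻¹ •
        (g (xb + u k) - g xb - A (u k))) atTop (nhds 0) := by
      apply squeeze_zero_norm'
        (a := fun k => 2 * L * (t k / r k) * (‖d‖ + (1/2) * r k * ‖wk k‖) ^ 2)
      · have hev : ∀ᶠ k in atTop, ‖u k‖ ≤ ε := by
          have := (hu0.norm).eventually_le_const (by simpa using hε)
          simpa using this
        filter_upwards [hev] with k hk
        have hub : ‖u k‖ ≤ t k * (‖d‖ + (1/2) * r k * ‖wk k‖) := by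
          calc ‖u k‖ ≤ ‖t k • d‖ + ‖((1/2 : ℝ) * t k * r k) • wk k‖ :=
                norm_add_le _ _
            _ = t k * ‖d‖ + (1/2) * t k * r k * ‖wk k‖ := by
                rw [norm_smul, norm_smul, Real.norm_eq_abs, Real.norm_eq_abs,
                  abs_of_pos (ht k), abs_of_pos (htrpos k)]
            _ = t k * (‖d‖ + (1/2) * r k * ‖wk k‖) := by ring
        have hq := hquad (xb + u k) (by simpa using hk)
        rw [add_sub_cancel_left] at hq
        have hupos : (0:ℝ) ≤ ‖d‖ + (1/2) * r k * ‖wk k‖ :=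
          add_nonneg (norm_nonneg d)
            (mul_nonneg (mul_nonneg (by norm_num) (hr k).le) (norm_nonneg _))
        calc ‖((1/2 : ℝ) * t k * r k)⁻¹ • (g (xb + u k) - g xb - A (u k))‖
            = ((1/2 : ℝ) * t k * r k)⁻¹ * ‖g (xb + u k) - g xb - A (u k)‖ := by
              rw [norm_smul, Real.norm_eq_abs, abs_of_pos (inv_pos.2 (htrpos k))]
          _ ≤ ((1/2 : ℝ) * t k * r k)⁻¹ * (L * ‖u k‖ ^ 2) := by
              exact mul_le_mul_of_nonneg_left hq (inv_pos.2 (htrpos k)).le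
          _ ≤ ((1/2 : ℝ) * t k * r k)⁻¹ *
              (L * (t k * (‖d‖ + (1/2) * r k * ‖wk k‖)) ^ 2) := by
              apply mul_le_mul_of_nonneg_left _ (inv_pos.2 (htrpos k)).le
              exact mul_le_mul_of_nonneg_left
                (pow_le_pow_left₀ (norm_nonneg _) hub 2) hL
          _ = 2 * L * (t k / r k) * (‖d‖ + (1/2) * r k * ‖wk k‖) ^ 2 := by
              field_simp [(ht k).ne', (hr k).ne']
      · have h1 : Tendsto (fun k => 2 * L * (t k / r k)) atTop (nhds 0) := by
          simpa using htr.const_mul (2 * L)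
        have h2 : Tendsto (fun k => (‖d‖ + (1/2) * r k * ‖wk k‖) ^ 2) atTop
            (nhds ((‖d‖ + (1/2) * 0 * ‖w‖) ^ 2)) := by
          exact ((tendsto_const_nhds.add
            (((hrt.const_mul (1/2:ℝ)).mul hwk.norm))).pow 2)
        have := h1.mul h2
        simpa using this
    have h3 := hAw.add herr
    rw [hvk]
    simpa using h3
  · -- membership
    intro k
    have hm := hmem k
    have hAu : A (u k) = t k • A d + ((1/2 : ℝ) * t k * r k) • A (wk k) := by
      rw [hu]; simp [map_add, map_smul]
    have hcancel : ((1/2 : ℝ) * t k * r k) • (((1/2 : ℝ) * t k * r k)⁻¹ •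
        (g (xb + u k) - g xb - A (u k))) = g (xb + u k) - g xb - A (u k) := by
      rw [smul_smul, mul_inv_cancel₀ (htrpos k).ne', one_smul]
    have heq : g xb + t k • A d + ((1/2 : ℝ) * t k * r k) • vk k = g (xb + u k) := by
      simp only [hvk]
      rw [smul_add, hcancel, hAu]
      abel
    have hm' : g (xb + u k) ∈ K := by
      simp only [hu]
      rw [← add_assoc]
      exact hm
    rw [heq]
    exact hm'
end
end

section
/- Let g : ℝⁿ → ℝᵐ be twice continuously differentiable, K ⊆ ℝᵐ closed, C = g⁻¹(K), x̄ ∈ C, and d ∈ T_C(x̄). Then T²_C(x̄; d) ⊆ {w ∈ ℝⁿ : ∇g(x̄)w + ∇²g(x̄)(d,d) ∈ T²_K(g(x̄); ∇g(x̄)d)}. -/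
open Filter Topology Set
open scoped RealInnerProductSpace

noncomputable section

variable {E : Type*} [NormedAddCommGroup E] [InnerProductSpace ℝ E]

open Asymptotics in
lemma taylor2 {E F : Type*} [NormedAddCommGroup E] [NormedSpace ℝ E]
    [NormedAddCommGroup F] [NormedSpace ℝ F]
    (f : E → F) (hf : ContDiff ℝ 2 f) (x : E) :
    (fun h => f (x + h) - f x - fderiv ℝ f x h
      - (1/2 : ℝ) • fderiv ℝ (fderiv ℝ f) x h h) =o[𝓝 0] fun h => ‖h‖ ^ 2 := by
  set A := fderiv ℝ f x with hA
  set B := fderiv ℝ (fderiv ℝ f) x with hBdef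
  have hfd : Differentiable ℝ f := hf.differentiable two_ne_zero
  have hfd' : Differentiable ℝ (fderiv ℝ f) :=
    (hf.fderiv_right (m := 1) le_rfl).differentiable one_ne_zero
  have hB : HasFDerivAt (fderiv ℝ f) B x := (hfd' x).hasFDerivAt
  have hsymm : ∀ v w, B v w = B w v :=
    second_derivative_symmetric (fun y => (hfd y).hasFDerivAt) hB
  set φ : E → F := fun h => f (x + h) - f x - A h - (1/2 : ℝ) • B h h with hφ
  have hφderiv : ∀ y : E, HasFDerivAt φ (fderiv ℝ f (x + y) - A - B y) y := by
    intro y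
    have h1 : HasFDerivAt (fun h => f (x + h)) (fderiv ℝ f (x + y)) y := by
      have := HasFDerivAt.comp y (hfd (x + y)).hasFDerivAt
        ((hasFDerivAt_id y).const_add x)
      simpa [Function.comp_def] using this
    have h4' : HasFDerivAt (fun h : E => (1/2 : ℝ) • B h h)
        ((1/2 : ℝ) • ((B.isBoundedBilinearMap.deriv (y, y)).comp
          ((ContinuousLinearMap.id ℝ E).prod (ContinuousLinearMap.id ℝ E)))) y := by
      have hQ : HasFDerivAt (fun h : E => B h h)
          ((B.isBoundedBilinearMap.deriv (y, y)).comp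
            ((ContinuousLinearMap.id ℝ E).prod (ContinuousLinearMap.id ℝ E))) y := by
        have hdiag : HasFDerivAt (fun h : E => (h, h))
            ((ContinuousLinearMap.id ℝ E).prod (ContinuousLinearMap.id ℝ E)) y :=
          (hasFDerivAt_id y).prodMk (hasFDerivAt_id y)
        have := HasFDerivAt.comp (f := fun h : E => (h, h)) y (B.isBoundedBilinearMap.hasFDerivAt (y, y)) hdiag
        exact this
      exact hQ.const_smul (1/2 : ℝ)
    have h4 : HasFDerivAt (fun h : E => (1/2 : ℝ) • B h h) (B y) y := by
      convert h4' using 1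
      ext u
      simp [IsBoundedBilinearMap.deriv_apply, hsymm u y]
      module
    have := ((h1.sub_const (f x)).sub A.hasFDerivAt).sub h4
    exact this
  rw [isLittleO_iff]
  intro ε hε
  have hlo : (fun h => fderiv ℝ f (x + h) - A - B h) =o[𝓝 0] fun h => h := by
    rw [hA]
    exact hasFDerivAt_iff_isLittleO_nhds_zero.1 hB
  rw [isLittleO_iff] at hlo
  obtain ⟨δ, hδ, hball⟩ := Metric.eventually_nhds_iff_ball.1 (hlo hε)
  have hmain : ∀ h : E, ‖h‖ < δ → ‖φ h‖ ≤ ε * ‖h‖ ^ 2 := by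
    intro h hh
    have hconv : Convex ℝ (Metric.closedBall (0 : E) ‖h‖) := convex_closedBall _ _
    have hd : ∀ y ∈ Metric.closedBall (0 : E) ‖h‖,
        HasFDerivWithinAt φ (fderiv ℝ f (x + y) - A - B y)
          (Metric.closedBall (0 : E) ‖h‖) y :=
      fun y _ => (hφderiv y).hasFDerivWithinAt
    have hbd : ∀ y ∈ Metric.closedBall (0 : E) ‖h‖,
        ‖fderiv ℝ f (x + y) - A - B y‖ ≤ ε * ‖h‖ := by
      intro y hy
      simp only [Metric.mem_closedBall, dist_zero_right] at hy
      have hyδ : y ∈ Metric.ball (0 : E) δ := by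
        simp only [Metric.mem_ball, dist_zero_right]; exact lt_of_le_of_lt hy hh
      calc ‖fderiv ℝ f (x + y) - A - B y‖ ≤ ε * ‖y‖ := hball y hyδ
        _ ≤ ε * ‖h‖ := by nlinarith [hε.le]
    have := hconv.norm_image_sub_le_of_norm_hasFDerivWithin_le hd hbd
      (Metric.mem_closedBall_self (norm_nonneg h))
      (show h ∈ Metric.closedBall (0:E) ‖h‖ by simp)
    have hφ0 : φ 0 = 0 := by simp [hφ]
    calc ‖φ h‖ = ‖φ h - φ 0‖ := by rw [hφ0, sub_zero]
      _ ≤ ε * ‖h‖ * ‖h - 0‖ := this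
      _ = ε * ‖h‖ ^ 2 := by rw [sub_zero]; ring
  filter_upwards [Metric.eventually_nhds_iff_ball.2 ⟨δ, hδ, fun y hy => hy⟩] with h hh
  have : ‖h‖ < δ := by simpa [dist_zero_right] using hh
  calc ‖φ h‖ ≤ ε * ‖h‖ ^ 2 := hmain h this
    _ = ε * ‖‖h‖ ^ 2‖ := by rw [Real.norm_of_nonneg (by positivity)]

open Asymptotics in
set_option maxHeartbeats 2000000 in
theorem stmt9 {n m : ℕ} (g : EuclideanSpace ℝ (Fin n) → EuclideanSpace ℝ (Fin m))
    (hg : ContDiff ℝ 2 g) (K : Set (EuclideanSpace ℝ (Fin m))) (hK : IsClosed K)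
    (xb : EuclideanSpace ℝ (Fin n)) (hxb : xb ∈ g ⁻¹' K)
    (d : EuclideanSpace ℝ (Fin n)) (hd : d ∈ tangentConeB (g ⁻¹' K) xb) :
    secondTangent (g ⁻¹' K) xb d ⊆
      {w | fderiv ℝ g xb w + (fderiv ℝ (fderiv ℝ g) xb d) d ∈
        secondTangent K (g xb) (fderiv ℝ g xb d)} := by
  intro w hw
  obtain ⟨t, wk, htpos, ht0, hwk, hmem⟩ := hw
  set A := fderiv ℝ g xb with hA
  set B := fderiv ℝ (fderiv ℝ g) xb with hB
  set h : ℕ → EuclideanSpace ℝ (Fin n) :=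
    fun k => t k • d + ((1/2 : ℝ) * t k ^ 2) • wk k with hh
  have hmem' : ∀ k, g (xb + h k) ∈ K := by
    intro k
    have := hmem k
    simpa [hh, add_assoc] using this
  refine ⟨t, fun k => ((2 : ℝ) / t k ^ 2) • (g (xb + h k) - g xb - t k • A d),
    htpos, ht0, ?_, ?_⟩
  · -- tendsto
    have hh0 : Tendsto h atTop (𝓝 0) := by
      have h1 : Tendsto (fun k => t k • d) atTop (𝓝 ((0 : ℝ) • d)) := ht0.smul_const d
      have hs2 : Tendsto (fun k => (1/2 : ℝ) * t k ^ 2) atTop (𝓝 ((1/2 : ℝ) * 0 ^ 2)) :=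
        tendsto_const_nhds.mul (ht0.pow 2)
      have h2 : Tendsto (fun k => ((1/2 : ℝ) * t k ^ 2) • wk k) atTop
          (𝓝 (((1/2 : ℝ) * 0 ^ 2) • w)) := hs2.smul hwk
      have := h1.add h2
      rw [hh]
      simpa using this
    have key : ∀ k, ((2 : ℝ) / t k ^ 2) • (g (xb + h k) - g xb - t k • A d)
        = ((2 : ℝ) / t k ^ 2) • (g (xb + h k) - g xb - A (h k) - (1/2 : ℝ) • B (h k) (h k))
          + A (wk k) + B d d + (t k / 2) • (B d (wk k) + B (wk k) d)
          + (t k ^ 2 / 4) • B (wk k) (wk k) := by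
      intro k
      have htk : t k ≠ 0 := (htpos k).ne'
      simp only [hh, map_add, map_smul, ContinuousLinearMap.add_apply,
        ContinuousLinearMap.smul_apply, smul_add, smul_sub, smul_smul]
      match_scalars <;> field_simp <;> ring
    have hφo := taylor2 g hg xb
    have h1 : (fun k => g (xb + h k) - g xb - A (h k) - (1/2 : ℝ) • B (h k) (h k))
        =o[atTop] (fun k => ‖h k‖ ^ 2) := hφo.comp_tendsto hh0
    have h2 : (fun k => ‖h k‖ ^ 2) =O[atTop] (fun k => t k ^ 2) := by
      rw [isBigO_iff]
      refine ⟨(‖d‖ + 1) ^ 2, ?_⟩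
      have hsm : Tendsto (fun k => (t k / 2) * ‖wk k‖) atTop (𝓝 (0 / 2 * ‖w‖)) :=
        (ht0.div_const 2).mul hwk.norm
      have hsm' : ∀ᶠ k in atTop, (t k / 2) * ‖wk k‖ < 1 := by
        apply hsm.eventually_lt_const
        norm_num
      filter_upwards [hsm'] with k hk
      have htk := (htpos k).le
      have hnorm : ‖h k‖ ≤ t k * (‖d‖ + 1) := by
        calc ‖h k‖ ≤ ‖t k • d‖ + ‖((1/2 : ℝ) * t k ^ 2) • wk k‖ := norm_add_le _ _
          _ = t k * ‖d‖ + ((1/2 : ℝ) * t k ^ 2) * ‖wk k‖ := by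
              rw [norm_smul, norm_smul, Real.norm_of_nonneg htk,
                Real.norm_of_nonneg (by positivity)]
          _ ≤ t k * (‖d‖ + 1) := by nlinarith [norm_nonneg (wk k)]
      calc ‖‖h k‖ ^ 2‖ = ‖h k‖ ^ 2 := Real.norm_of_nonneg (by positivity)
        _ ≤ (t k * (‖d‖ + 1)) ^ 2 := by
            have := pow_le_pow_left₀ (norm_nonneg (h k)) hnorm 2
            exact this
        _ = (‖d‖ + 1) ^ 2 * ‖t k ^ 2‖ := by
            rw [Real.norm_of_nonneg (by positivity)]; ring
    have h3 := h1.trans_isBigO h2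
    have h4 : Tendsto (fun k => (t k ^ 2)⁻¹ •
        (g (xb + h k) - g xb - A (h k) - (1/2 : ℝ) • B (h k) (h k))) atTop (𝓝 0) :=
      h3.tendsto_inv_smul_nhds_zero
    have hterm1 : Tendsto (fun k => ((2 : ℝ) / t k ^ 2) •
        (g (xb + h k) - g xb - A (h k) - (1/2 : ℝ) • B (h k) (h k))) atTop (𝓝 0) := by
      have := h4.const_smul (2 : ℝ)
      simp only [smul_zero] at this
      refine this.congr fun k => ?_
      rw [smul_smul]
      norm_num [div_eq_mul_inv]
    have htermA : Tendsto (fun k => A (wk k)) atTop (𝓝 (A w)) :=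
      (A.continuous.tendsto w).comp hwk
    have hterm3 : Tendsto (fun k => (t k / 2) • (B d (wk k) + B (wk k) d)) atTop (𝓝 0) := by
      have hv : Tendsto (fun k => B d (wk k) + B (wk k) d) atTop (𝓝 (B d w + B w d)) := by
        have hv1 : Tendsto (fun k => B d (wk k)) atTop (𝓝 (B d w)) :=
          ((B d).continuous.tendsto w).comp hwk
        have hv2 : Tendsto (fun k => B (wk k) d) atTop (𝓝 (B w d)) := by
          have := ((B.flip d).continuous.tendsto w).comp hwk
          simpa [Function.comp_def] using this
        exact hv1.add hv2
      have := (ht0.div_const 2).smul hv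
      simpa using this
    have hterm4 : Tendsto (fun k => (t k ^ 2 / 4) • B (wk k) (wk k)) atTop (𝓝 0) := by
      have hcontQ : Continuous (fun v : EuclideanSpace ℝ (Fin n) => B v v) :=
        B.isBoundedBilinearMap.continuous.comp (continuous_id.prodMk continuous_id)
      have hv : Tendsto (fun k => B (wk k) (wk k)) atTop (𝓝 (B w w)) :=
        (hcontQ.tendsto w).comp hwk
      have hs : Tendsto (fun k => t k ^ 2 / 4) atTop (𝓝 (0 ^ 2 / 4)) := (ht0.pow 2).div_const 4
      have := hs.smul hv
      simpa using this
    have hsum := (((hterm1.add htermA).add (tendsto_const_nhds (x := B d d))).add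
      hterm3).add hterm4
    refine Tendsto.congr (fun k => (key k).symm) ?_
    simpa using hsum
  · intro k
    have htk : t k ≠ 0 := (htpos k).ne'
    have hcoef : ((1/2 : ℝ) * t k ^ 2) * ((2 : ℝ) / t k ^ 2) = 1 := by field_simp
    show g xb + t k • A d + ((1/2 : ℝ) * t k ^ 2) •
      (((2 : ℝ) / t k ^ 2) • (g (xb + h k) - g xb - t k • A d)) ∈ K
    rw [smul_smul, hcoef, one_smul]
    have heq : g xb + t k • A d + (g (xb + h k) - g xb - t k • A d) = g (xb + h k) := by abel
    rw [heq]
    exact hmem' k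
end
end

section
/- Let g : ℝⁿ → ℝᵐ be twice continuously differentiable, K ⊆ ℝᵐ closed, C = g⁻¹(K), x̄ ∈ C, and d ∈ T_C(x̄). Assume the mapping M(x) = g(x) − K is metrically subregular at (x̄, 0) in direction d with modulus κ, i.e., there are ρ, δ, κ > 0 with d(x, g⁻¹(K)) ≤ κ·d(g(x), K) for all x ∈ x̄ + V_{ρ,δ}(d). Then for all w ∈ ℝⁿ: dist(w, T''_C(x̄; d)) ≤ κ · dist(∇g(x̄)w, T''_K(g(x̄); ∇g(x̄)d)), and consequently T''_C(x̄; d) = {w : ∇g(x̄)w ∈ T''_K(g(x̄); ∇g(x̄)d)}. -/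
open Filter Topology Set
open scoped RealInnerProductSpace

set_option maxHeartbeats 4000000
noncomputable section

variable {E : Type*} [NormedAddCommGroup E] [InnerProductSpace ℝ E]

lemma taylor_bound {E F : Type*} [NormedAddCommGroup E] [NormedSpace ℝ E]
    [NormedAddCommGroup F] [NormedSpace ℝ F] (g : E → F) (hg : ContDiff ℝ 2 g) (x : E) :
    ∃ L : ℝ, 0 ≤ L ∧ ∃ ε > (0:ℝ), ∀ h : E, ‖h‖ ≤ ε →
      ‖g (x + h) - g x - fderiv ℝ g x h‖ ≤ L * ‖h‖ ^ 2 := by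
  have h1 : ContDiff ℝ 1 (fderiv ℝ g) := hg.fderiv_right (by norm_num)
  obtain ⟨Kc, t, ht, hlip⟩ := (h1.contDiffAt (x := x)).exists_lipschitzOnWith
  obtain ⟨ε, hε, hball⟩ : ∃ ε > (0:ℝ), Metric.closedBall x ε ⊆ t := by
    rcases Metric.mem_nhds_iff.1 ht with ⟨ε, hε, hb⟩
    exact ⟨ε/2, by linarith, (Metric.closedBall_subset_ball (by linarith)).trans hb⟩
  refine ⟨Kc, Kc.coe_nonneg, ε, hε, fun h hh => ?_⟩
  set s := Metric.closedBall x ‖h‖ with hsdef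
  have hsub : s ⊆ t := (Metric.closedBall_subset_closedBall hh).trans hball
  have hder : ∀ z ∈ s, HasFDerivWithinAt g (fderiv ℝ g z) s z := fun z _ =>
    ((hg.differentiable (by norm_num)).differentiableAt.hasFDerivAt).hasFDerivWithinAt
  have hxt : x ∈ s := Metric.mem_closedBall_self (norm_nonneg h)
  have hbound : ∀ z ∈ s, ‖fderiv ℝ g z - fderiv ℝ g x‖ ≤ (Kc : ℝ) * ‖h‖ := by
    intro z hz
    have h2 := hlip.dist_le_mul z (hsub hz) x (hsub hxt)
    rw [dist_eq_norm] at h2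
    refine h2.trans ?_
    have : dist z x ≤ ‖h‖ := Metric.mem_closedBall.1 hz
    nlinarith [Kc.coe_nonneg, dist_nonneg (x := z) (y := x)]
  have hy : x + h ∈ s := by
    show x + h ∈ Metric.closedBall x ‖h‖
    simp [Metric.mem_closedBall, dist_eq_norm]
  have := Convex.norm_image_sub_le_of_norm_hasFDerivWithin_le' hder hbound
    (convex_closedBall _ _) hxt hy
  simpa [pow_two, mul_assoc] using this

lemma mem_asymp_of_eventually {S : Set E} {x d w : E} {t r : ℕ → ℝ} {wk : ℕ → E}
    (ht : ∀ k, 0 < t k) (hr : ∀ k, 0 < r k)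
    (ht0 : Tendsto t atTop (nhds 0)) (hr0 : Tendsto r atTop (nhds 0))
    (htr : Tendsto (fun k => t k / r k) atTop (nhds 0))
    (hwk : Tendsto wk atTop (nhds w))
    (hmem : ∀ᶠ k in atTop, x + t k • d + ((1/2:ℝ) * t k * r k) • wk k ∈ S) :
    w ∈ asympTangent S x d := by
  obtain ⟨N, hN⟩ := eventually_atTop.1 hmem
  exact ⟨fun k => t (k+N), fun k => r (k+N), fun k => wk (k+N), fun k => ht _, fun k => hr _,
    (tendsto_add_atTop_iff_nat N).2 ht0, (tendsto_add_atTop_iff_nat N).2 hr0,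
    (tendsto_add_atTop_iff_nat N).2 htr, (tendsto_add_atTop_iff_nat N).2 hwk,
    fun k => hN _ (Nat.le_add_left N k)⟩
lemma easy_dir {F : Type*} [NormedAddCommGroup F] [InnerProductSpace ℝ F]
    (g : E → F) (hg : ContDiff ℝ 2 g) (K : Set F)
    (xb : E) (d : E) (w : E)
    (hw : w ∈ asympTangent (g ⁻¹' K) xb d) :
    fderiv ℝ g xb w ∈ asympTangent K (g xb) (fderiv ℝ g xb d) := by
  obtain ⟨t, r, wk, htp, hrp, ht0, hr0, htr, hwk, hmem⟩ := hw
  obtain ⟨L, hL, ε₀, hε₀, htay⟩ := taylor_bound g hg xb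
  set Dg := fderiv ℝ g xb with hDg
  set s : ℕ → ℝ := fun k => (1/2:ℝ) * t k * r k with hs
  have hsp : ∀ k, 0 < s k := fun k => by
    have h1 := htp k; have h2 := hrp k
    simp only [hs]; positivity
  set h : ℕ → E := fun k => t k • d + s k • wk k with hh
  set err : ℕ → F := fun k => g (xb + h k) - g xb - Dg (h k) with herr
  set vk : ℕ → F := fun k => Dg (wk k) + (s k)⁻¹ • err k with hvk
  have hmemK : ∀ k, g xb + t k • Dg d + s k • vk k ∈ K := by
    intro k
    have heq : g xb + t k • Dg d + s k • vk k = g (xb + h k) := by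
      simp only [hvk, herr, smul_add, smul_inv_smul₀ (hsp k).ne']
      have hDgh : Dg (h k) = t k • Dg d + s k • Dg (wk k) := by
        simp [hh, map_add, map_smul]
      rw [hDgh]; abel
    rw [heq]
    have h2 := hmem k
    have : xb + h k = xb + t k • d + ((1/2:ℝ) * t k * r k) • wk k := by
      simp only [hh, hs]; rw [add_assoc]
    rw [this]; exact h2
  set M : ℝ := ‖d‖ + ‖w‖ + 1 with hM
  have hM0 : 0 < M := by positivity
  have hbig : Tendsto (fun k => (s k)⁻¹ • err k) atTop (nhds 0) := by
    rw [tendsto_zero_iff_norm_tendsto_zero]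
    have hbnd : ∀ᶠ k in atTop, ‖(s k)⁻¹ • err k‖ ≤ 2 * L * M ^ 2 * (t k / r k) := by
      filter_upwards [hwk.norm.eventually_lt_const (lt_add_one ‖w‖),
        hr0.eventually_lt_const (by norm_num : (0:ℝ) < 2),
        ht0.eventually_lt_const (by positivity : (0:ℝ) < ε₀ / M)] with k hk1 hk2 hk3
      have h1 := htp k; have h2 := hrp k
      have hhn : ‖h k‖ ≤ t k * M := by
        have : ‖h k‖ ≤ t k * ‖d‖ + s k * ‖wk k‖ := by
          refine (norm_add_le _ _).trans ?_
          rw [norm_smul, norm_smul, Real.norm_eq_abs, Real.norm_eq_abs,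
            abs_of_pos h1, abs_of_pos (hsp k)]
        refine this.trans ?_
        have hsk : s k * ‖wk k‖ ≤ t k * (‖w‖ + 1) := by
          have hwkn : ‖wk k‖ ≤ ‖w‖ + 1 := le_of_lt hk1
          have : s k ≤ t k := by
            simp only [hs]; nlinarith
          nlinarith [norm_nonneg (wk k)]
        simp only [hM]; nlinarith
      have hhε : ‖h k‖ ≤ ε₀ := by
        refine hhn.trans ?_
        have : t k * M ≤ (ε₀ / M) * M := by nlinarith
        calc t k * M ≤ (ε₀ / M) * M := this
          _ = ε₀ := by field_simp
      have herrb : ‖err k‖ ≤ L * (t k * M) ^ 2 := by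
        refine (htay (h k) hhε).trans ?_
        have h3 : ‖h k‖ * ‖h k‖ ≤ (t k * M) * (t k * M) :=
          mul_le_mul hhn hhn (norm_nonneg _) (by positivity)
        nlinarith
      have : ‖(s k)⁻¹ • err k‖ = (s k)⁻¹ * ‖err k‖ := by
        rw [norm_smul, Real.norm_eq_abs, abs_of_pos (inv_pos.2 (hsp k))]
      rw [this]
      have hkey : (s k)⁻¹ * (L * (t k * M) ^ 2) = 2 * L * M ^ 2 * (t k / r k) := by
        simp only [hs]; field_simp
      calc (s k)⁻¹ * ‖err k‖ ≤ (s k)⁻¹ * (L * (t k * M) ^ 2) := by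
            apply mul_le_mul_of_nonneg_left herrb (le_of_lt (inv_pos.2 (hsp k)))
        _ = 2 * L * M ^ 2 * (t k / r k) := hkey
    refine squeeze_zero' (Eventually.of_forall fun k => norm_nonneg _) hbnd ?_
    have := htr.const_mul (2 * L * M ^ 2)
    simpa using this
  have hvkto : Tendsto vk atTop (nhds (Dg w)) := by
    have := ((Dg.continuous.tendsto w).comp hwk).add hbig
    simpa [hvk] using this
  exact ⟨t, r, vk, htp, hrp, ht0, hr0, htr, hvkto, hmemK⟩
lemma core_approx {n m : ℕ} (g : EuclideanSpace ℝ (Fin n) → EuclideanSpace ℝ (Fin m))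
    (hg : ContDiff ℝ 2 g) (K : Set (EuclideanSpace ℝ (Fin m))) (hK : IsClosed K)
    (xb : EuclideanSpace ℝ (Fin n)) (hxb : xb ∈ g ⁻¹' K)
    (d : EuclideanSpace ℝ (Fin n)) (ρ δ κ : ℝ) (hρ : 0 < ρ) (hδ : 0 < δ) (hκ : 0 < κ)
    (hsub : ∀ x : EuclideanSpace ℝ (Fin n), x - xb ∈ dirNbhd d ρ δ →
      Metric.infDist x (g ⁻¹' K) ≤ κ * Metric.infDist (g x) K)
    (w : EuclideanSpace ℝ (Fin n)) (u : EuclideanSpace ℝ (Fin m))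
    (hu : u ∈ asympTangent K (g xb) (fderiv ℝ g xb d)) :
    ∃ (t r : ℕ → ℝ) (wk : ℕ → EuclideanSpace ℝ (Fin n)) (e : ℕ → ℝ),
      (∀ k, 0 < t k) ∧ (∀ k, 0 < r k) ∧ Tendsto t atTop (nhds 0) ∧
      Tendsto r atTop (nhds 0) ∧ Tendsto (fun k => t k / r k) atTop (nhds 0) ∧
      (∀ k, xb + t k • d + ((1/2:ℝ) * t k * r k) • wk k ∈ g ⁻¹' K) ∧
      Tendsto e atTop (nhds 0) ∧
      (∀ᶠ k in atTop, ‖wk k - w‖ ≤ κ * ‖fderiv ℝ g xb w - u‖ + e k) := by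
  obtain ⟨t, r, uk, htp, hrp, ht0, hr0, htr, huk, hmemK⟩ := hu
  obtain ⟨L, hL, ε₀, hε₀, htay⟩ := taylor_bound g hg xb
  set Dg := fderiv ℝ g xb with hDg
  have hCcl : IsClosed (g ⁻¹' K) := hK.preimage hg.continuous
  have hCne : (g ⁻¹' K).Nonempty := ⟨xb, hxb⟩
  set x : ℕ → EuclideanSpace ℝ (Fin n) :=
    fun k => xb + t k • d + ((1/2:ℝ) * t k * r k) • w with hx
  choose x' hx'mem hx'dist using fun k => hCcl.exists_infDist_eq_dist hCne (x k)
  set wk : ℕ → EuclideanSpace ℝ (Fin n) :=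
    fun k => w + ((1/2:ℝ) * t k * r k)⁻¹ • (x' k - x k) with hwk
  have hspos : ∀ k, 0 < (1/2:ℝ) * t k * r k := fun k => by
    have h1 := htp k; have h2 := hrp k; positivity
  have hmemC : ∀ k, xb + t k • d + ((1/2:ℝ) * t k * r k) • wk k ∈ g ⁻¹' K := by
    intro k
    have heq : xb + t k • d + ((1/2:ℝ) * t k * r k) • wk k = x' k := by
      simp only [hwk, smul_add, smul_inv_smul₀ (hspos k).ne', hx]
      abel
    rw [heq]; exact hx'mem k
  set M : ℝ := ‖d‖ + ‖w‖ + 1 with hM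
  have hM0 : 0 < M := by positivity
  have evA : ∀ᶠ k in atTop, r k < 2 := hr0.eventually_lt_const (by norm_num)
  have evB : ∀ᶠ k in atTop, t k < min (ε₀ / M) (δ / M) :=
    ht0.eventually_lt_const (by positivity)
  have evC : ∀ᶠ k in atTop, x k - xb ∈ dirNbhd d ρ δ := by
    by_cases hd0 : d = 0
    · filter_upwards [evA, evB] with k hk2 hk3
      have h1 := htp k; have h2 := hrp k
      constructor
      · have hn : ‖x k - xb‖ = ((1/2:ℝ) * t k * r k) * ‖w‖ := by
          simp only [hx, hd0, smul_zero, add_zero]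
          rw [add_sub_cancel_left, norm_smul, Real.norm_eq_abs, abs_of_pos (hspos k)]
        rw [hn]
        have htd : t k < δ / M := lt_of_lt_of_le hk3 (min_le_right _ _)
        have hw1 : ‖w‖ + 1 ≤ M := by simp only [hM]; nlinarith [norm_nonneg d]
        have hd1 : t k * M ≤ δ := by
          calc t k * M ≤ (δ / M) * M := by nlinarith
            _ = δ := by field_simp
        have e1 : (1/2:ℝ) * t k * r k * ‖w‖ ≤ t k * ‖w‖ := by
          nlinarith [mul_nonneg (mul_nonneg h1.le (norm_nonneg w))
            (show (0:ℝ) ≤ 1 - r k / 2 by linarith)]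
        have e2 : t k * ‖w‖ ≤ t k * M := by
          nlinarith [mul_nonneg h1.le (show (0:ℝ) ≤ M - ‖w‖ by linarith)]
        linarith
      · simp [hd0]
    · have hdn : 0 < ‖d‖ := norm_pos_iff.2 hd0
      have hcpos : (0:ℝ) < min (‖d‖) (ρ * ‖d‖ / 2) := by positivity
      have evD : ∀ᶠ k in atTop, r k * (‖w‖ + 1) < min (‖d‖) (ρ * ‖d‖ / 2) := by
        have h7 : Tendsto (fun k => r k * (‖w‖ + 1)) atTop (nhds 0) := by
          simpa using hr0.mul_const (‖w‖ + 1)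
        exact h7.eventually_lt_const hcpos
      filter_upwards [evA, evB, evD] with k hk2 hk3 hk4
      have h1 := htp k; have h2 := hrp k
      set sk : ℝ := (1/2:ℝ) * t k * r k with hsk
      have hskpos : 0 < sk := hspos k
      set v : EuclideanSpace ℝ (Fin n) := x k - xb with hv
      have hveq : v = t k • d + sk • w := by
        rw [hv]; simp only [hx]; rw [hsk]; abel
      have hvd : |‖v‖ - t k * ‖d‖| ≤ sk * ‖w‖ := by
        have h5 : ‖v - t k • d‖ = sk * ‖w‖ := by
          rw [hveq]
          simp only [add_sub_cancel_left]
          rw [norm_smul, Real.norm_eq_abs, abs_of_pos hskpos]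
        have h6 : |‖v‖ - ‖t k • d‖| ≤ ‖v - t k • d‖ := abs_norm_sub_norm_le _ _
        rw [norm_smul, Real.norm_eq_abs, abs_of_pos h1] at h6
        rw [h5] at h6; exact h6
      constructor
      · have hvle : ‖v‖ ≤ t k * M := by
          have h8 := abs_le.1 hvd
          have hsw : sk * ‖w‖ ≤ t k * (‖w‖ + 1) := by
            have h9 : sk ≤ t k := by rw [hsk]; nlinarith
            nlinarith [norm_nonneg w]
          simp only [hM]; nlinarith [norm_nonneg w]
        refine hvle.trans ?_
        have htd : t k < δ / M := lt_of_lt_of_le hk3 (min_le_right _ _)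
        calc t k * M ≤ (δ / M) * M := by nlinarith
          _ = δ := by field_simp
      · have hkey : ‖d‖ • v - ‖v‖ • d = (‖d‖ * t k - ‖v‖) • d + (‖d‖ * sk) • w := by
          rw [hveq]; module
        have hnorm1 : ‖‖d‖ • v - ‖v‖ • d‖ ≤ |‖d‖ * t k - ‖v‖| * ‖d‖ + ‖d‖ * sk * ‖w‖ := by
          rw [hkey]
          refine (norm_add_le _ _).trans ?_
          rw [norm_smul, norm_smul, Real.norm_eq_abs, Real.norm_eq_abs,
            abs_of_pos (show (0:ℝ) < ‖d‖ * sk by positivity)]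
        have habs : |‖d‖ * t k - ‖v‖| ≤ sk * ‖w‖ := by
          calc |‖d‖ * t k - ‖v‖| = |‖v‖ - t k * ‖d‖| := by rw [abs_sub_comm]; ring_nf
            _ ≤ sk * ‖w‖ := hvd
        have hLHS : ‖‖d‖ • v - ‖v‖ • d‖ ≤ 2 * sk * ‖d‖ * ‖w‖ := by
          refine hnorm1.trans ?_
          nlinarith [norm_nonneg w, hdn]
        refine hLHS.trans ?_
        have hvge : t k * ‖d‖ - sk * ‖w‖ ≤ ‖v‖ := by
          have := (abs_le.1 hvd).1; linarith
        have hr1 : r k * ‖w‖ < ‖d‖ := by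
          have := lt_of_lt_of_le hk4 (min_le_left _ _)
          nlinarith [norm_nonneg w]
        have hr2 : r k * ‖w‖ < ρ * ‖d‖ / 2 := by
          have := lt_of_lt_of_le hk4 (min_le_right _ _)
          nlinarith [norm_nonneg w]
        have hkey2 : r k * ‖w‖ + ρ * (r k * ‖w‖) / 2 ≤ ρ * ‖d‖ := by
          nlinarith [mul_lt_mul_of_pos_left hr1 hρ]
        have hstep : 2 * sk * ‖d‖ * ‖w‖ ≤ ρ * (t k * ‖d‖ - sk * ‖w‖) * ‖d‖ := by
          rw [hsk]
          nlinarith [mul_nonneg (mul_pos h1 hdn).le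
            (show (0:ℝ) ≤ ρ * ‖d‖ - (r k * ‖w‖ + ρ * (r k * ‖w‖) / 2) by linarith)]
        refine hstep.trans ?_
        nlinarith [mul_pos hρ hdn, hvge]
  have hbound : ∀ᶠ k in atTop, ‖wk k - w‖ ≤
      κ * ‖Dg w - uk k‖ + 2 * κ * L * M ^ 2 * (t k / r k) := by
    filter_upwards [evA, evB, evC] with k hk2 hk3 hkC
    have h1 := htp k; have h2 := hrp k
    set sk : ℝ := (1/2:ℝ) * t k * r k with hsk
    have hskpos : 0 < sk := hspos k
    set h' : EuclideanSpace ℝ (Fin n) := t k • d + sk • w with hh'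
    have hxk : x k = xb + h' := by simp only [hx, hh', hsk]; rw [add_assoc]
    have hhn : ‖h'‖ ≤ t k * M := by
      have h3 : ‖h'‖ ≤ t k * ‖d‖ + sk * ‖w‖ := by
        rw [hh']
        refine (norm_add_le _ _).trans ?_
        rw [norm_smul, norm_smul, Real.norm_eq_abs, Real.norm_eq_abs,
          abs_of_pos h1, abs_of_pos hskpos]
      have hsw : sk * ‖w‖ ≤ t k * (‖w‖ + 1) := by
        have h9 : sk ≤ t k := by rw [hsk]; nlinarith
        nlinarith [norm_nonneg w]
      simp only [hM]; nlinarith [norm_nonneg w]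
    have hhe : ‖h'‖ ≤ ε₀ := by
      refine hhn.trans ?_
      have htd : t k < ε₀ / M := lt_of_lt_of_le hk3 (min_le_left _ _)
      calc t k * M ≤ (ε₀ / M) * M := by nlinarith
        _ = ε₀ := by field_simp
    have htayk : ‖g (xb + h') - g xb - Dg h'‖ ≤ L * (t k * M) ^ 2 := by
      refine (htay h' hhe).trans ?_
      have h3 : ‖h'‖ * ‖h'‖ ≤ (t k * M) * (t k * M) :=
        mul_le_mul hhn hhn (norm_nonneg _) (by positivity)
      nlinarith
    have hyK : g xb + t k • Dg d + sk • uk k ∈ K := by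
      have := hmemK k; rw [← hsk] at this; exact this
    have hgdiff : g (x k) - (g xb + t k • Dg d + sk • uk k)
        = (g (xb + h') - g xb - Dg h') + sk • (Dg w - uk k) := by
      rw [hxk]
      have hDgh : Dg h' = t k • Dg d + sk • Dg w := by
        simp [hh', map_add, map_smul]
      rw [smul_sub, hDgh]; abel
    have hdistK : Metric.infDist (g (x k)) K ≤ L * (t k * M) ^ 2 + sk * ‖Dg w - uk k‖ := by
      refine (Metric.infDist_le_dist_of_mem hyK).trans ?_
      rw [dist_eq_norm, hgdiff]
      refine (norm_add_le _ _).trans ?_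
      rw [norm_smul, Real.norm_eq_abs, abs_of_pos hskpos]
      exact add_le_add htayk le_rfl
    have hinfC : Metric.infDist (x k) (g ⁻¹' K) ≤
        κ * (L * (t k * M) ^ 2 + sk * ‖Dg w - uk k‖) :=
      (hsub (x k) hkC).trans (mul_le_mul_of_nonneg_left hdistK hκ.le)
    have hdx : ‖x' k - x k‖ ≤ κ * (L * (t k * M) ^ 2 + sk * ‖Dg w - uk k‖) := by
      rw [hx'dist k] at hinfC
      calc ‖x' k - x k‖ = dist (x k) (x' k) := by rw [dist_eq_norm, norm_sub_rev]
        _ ≤ _ := hinfC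
    have hwkw : ‖wk k - w‖ = sk⁻¹ * ‖x' k - x k‖ := by
      have h5 : wk k - w = sk⁻¹ • (x' k - x k) := by
        simp only [hwk, hsk]; abel
      rw [h5, norm_smul, Real.norm_eq_abs, abs_of_pos (inv_pos.2 hskpos)]
    rw [hwkw]
    calc sk⁻¹ * ‖x' k - x k‖
        ≤ sk⁻¹ * (κ * (L * (t k * M) ^ 2 + sk * ‖Dg w - uk k‖)) :=
          mul_le_mul_of_nonneg_left hdx (inv_pos.2 hskpos).le
      _ = κ * ‖Dg w - uk k‖ + 2 * κ * L * M ^ 2 * (t k / r k) := by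
          rw [hsk]; field_simp; ring
  refine ⟨t, r, wk,
    fun k => κ * ‖Dg w - uk k‖ - κ * ‖Dg w - u‖ + 2 * κ * L * M ^ 2 * (t k / r k),
    htp, hrp, ht0, hr0, htr, hmemC, ?_, ?_⟩
  · have l1 : Tendsto (fun k => ‖Dg w - uk k‖) atTop (nhds ‖Dg w - u‖) :=
      (tendsto_const_nhds.sub huk).norm
    have l2 : Tendsto (fun k => κ * ‖Dg w - uk k‖ - κ * ‖Dg w - u‖
        + 2 * κ * L * M ^ 2 * (t k / r k)) atTop
        (nhds (κ * ‖Dg w - u‖ - κ * ‖Dg w - u‖ + 2 * κ * L * M ^ 2 * 0)) :=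
      ((l1.const_mul κ).sub tendsto_const_nhds).add (htr.const_mul _)
    simpa using l2
  · filter_upwards [hbound] with k hk
    linarith
theorem stmt10 {n m : ℕ} (g : EuclideanSpace ℝ (Fin n) → EuclideanSpace ℝ (Fin m))
    (hg : ContDiff ℝ 2 g) (K : Set (EuclideanSpace ℝ (Fin m))) (hK : IsClosed K)
    (xb : EuclideanSpace ℝ (Fin n)) (hxb : xb ∈ g ⁻¹' K)
    (d : EuclideanSpace ℝ (Fin n)) (hd : d ∈ tangentConeB (g ⁻¹' K) xb)
    (ρ δ κ : ℝ) (hρ : 0 < ρ) (hδ : 0 < δ) (hκ : 0 < κ)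
    (hsub : ∀ x : EuclideanSpace ℝ (Fin n), x - xb ∈ dirNbhd d ρ δ →
      Metric.infDist x (g ⁻¹' K) ≤ κ * Metric.infDist (g x) K) :
    (∀ w : EuclideanSpace ℝ (Fin n),
      EMetric.infEdist w (asympTangent (g ⁻¹' K) xb d) ≤
        ENNReal.ofReal κ *
          EMetric.infEdist (fderiv ℝ g xb w) (asympTangent K (g xb) (fderiv ℝ g xb d))) ∧
    asympTangent (g ⁻¹' K) xb d =
      {w | fderiv ℝ g xb w ∈ asympTangent K (g xb) (fderiv ℝ g xb d)} := by
  set Dg := fderiv ℝ g xb with hDg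
  set A := asympTangent (g ⁻¹' K) xb d with hA
  set B := asympTangent K (g xb) (Dg d) with hB
  have key : ∀ (w : EuclideanSpace ℝ (Fin n)) (u : EuclideanSpace ℝ (Fin m)), u ∈ B →
      ∃ w' ∈ A, dist w w' ≤ κ * dist (Dg w) u := by
    intro w u hu
    obtain ⟨t, r, wk, e, htp, hrp, ht0, hr0, htr, hmemC, he0, hev⟩ :=
      core_approx g hg K hK xb hxb d ρ δ κ hρ hδ hκ hsub w u hu
    have hebd : ∀ᶠ k in atTop, e k < 1 := he0.eventually_lt_const one_pos
    obtain ⟨N, hN⟩ := eventually_atTop.1 (hev.and hebd)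
    have hball : ∀ k, wk (k + N) ∈ Metric.closedBall w (κ * ‖Dg w - u‖ + 1) := by
      intro k
      obtain ⟨h1, h2⟩ := hN _ (Nat.le_add_left N k)
      rw [Metric.mem_closedBall, dist_eq_norm]
      linarith
    obtain ⟨a, _, φ, hφ, hconv⟩ :=
      tendsto_subseq_of_bounded Metric.isBounded_closedBall hball
    set ψ : ℕ → ℕ := fun k => φ k + N with hψ
    have hψmono : StrictMono ψ := fun i j hij => show φ i + N < φ j + N from by have := hφ hij; omega
    have hψtop : Tendsto ψ atTop atTop := hψmono.tendsto_atTop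
    have hconv' : Tendsto (fun k => wk (ψ k)) atTop (nhds a) := hconv
    have hmemA : a ∈ A := ⟨fun k => t (ψ k), fun k => r (ψ k), fun k => wk (ψ k),
      fun k => htp _, fun k => hrp _, ht0.comp hψtop, hr0.comp hψtop, htr.comp hψtop,
      hconv', fun k => hmemC (ψ k)⟩
    refine ⟨a, hmemA, ?_⟩
    rw [dist_eq_norm, dist_eq_norm]
    have hle : Tendsto (fun k => ‖wk (ψ k) - w‖) atTop (nhds ‖a - w‖) :=
      (hconv'.sub tendsto_const_nhds).norm
    have hre : Tendsto (fun k => κ * ‖Dg w - u‖ + e (ψ k)) atTop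
        (nhds (κ * ‖Dg w - u‖ + 0)) := tendsto_const_nhds.add (he0.comp hψtop)
    have hfin := le_of_tendsto_of_tendsto hle hre (hψtop.eventually hev)
    rw [norm_sub_rev]
    simpa using hfin
  have hsubset : ∀ w, Dg w ∈ B → w ∈ A := by
    intro w hw
    obtain ⟨t, r, wk, e, htp, hrp, ht0, hr0, htr, hmemC, he0, hev⟩ :=
      core_approx g hg K hK xb hxb d ρ δ κ hρ hδ hκ hsub w (Dg w) hw
    have hwk : Tendsto wk atTop (nhds w) := by
      rw [tendsto_iff_norm_sub_tendsto_zero]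
      refine squeeze_zero' (Eventually.of_forall fun k => norm_nonneg _) ?_ he0
      filter_upwards [hev] with k hk
      simpa [hDg] using hk
    exact ⟨t, r, wk, htp, hrp, ht0, hr0, htr, hwk, hmemC⟩
  constructor
  · intro w
    have h0 : ENNReal.ofReal κ ≠ 0 := (ENNReal.ofReal_pos.2 hκ).ne'
    have hmul : ENNReal.ofReal κ * EMetric.infEdist (Dg w) B =
        ⨅ u ∈ B, ENNReal.ofReal κ * edist (Dg w) u := by
      have h1 : EMetric.infEdist (Dg w) B = ⨅ u ∈ B, edist (Dg w) u := rfl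
      rw [h1, ENNReal.mul_iInf_of_ne h0 ENNReal.ofReal_ne_top]
      exact iInf_congr fun u => ENNReal.mul_iInf_of_ne h0 ENNReal.ofReal_ne_top
    rw [hmul]
    refine le_iInf₂ fun u hu => ?_
    obtain ⟨w', hw'A, hw'd⟩ := key w u hu
    calc EMetric.infEdist w A ≤ edist w w' := EMetric.infEdist_le_edist_of_mem hw'A
      _ = ENNReal.ofReal (dist w w') := edist_dist _ _
      _ ≤ ENNReal.ofReal (κ * dist (Dg w) u) := ENNReal.ofReal_le_ofReal hw'd
      _ = ENNReal.ofReal κ * ENNReal.ofReal (dist (Dg w) u) := ENNReal.ofReal_mul hκ.le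
      _ = ENNReal.ofReal κ * edist (Dg w) u := by rw [edist_dist]
  · ext w
    simp only [Set.mem_setOf_eq]
    exact ⟨fun h => easy_dir g hg K xb d w h, fun h => hsubset w h⟩
end
end

section
/- Let f : ℝⁿ → ℝ be continuously differentiable, C ⊆ ℝⁿ closed, x̄ ∈ C, and d ∈ T_C(x̄). Suppose x̄ is a local optimal solution of min f over C in direction d, i.e., there exist ρ, δ > 0 with f(x) ≥ f(x̄) for all x ∈ C ∩ (x̄ + V_{ρ,δ}(d)). Then ∇f(x̄)·d ≥ 0. -/
open Filter Topology Set
open scoped RealInnerProductSpace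

noncomputable section

variable {E : Type*} [NormedAddCommGroup E] [InnerProductSpace ℝ E]

theorem stmt11 {n : ℕ} (f : EuclideanSpace ℝ (Fin n) → ℝ) (hf : ContDiff ℝ 1 f)
    (C : Set (EuclideanSpace ℝ (Fin n))) (hC : IsClosed C)
    (xb : EuclideanSpace ℝ (Fin n)) (hxb : xb ∈ C)
    (d : EuclideanSpace ℝ (Fin n)) (hd : d ∈ tangentConeB C xb)
    (hopt : ∃ ρ > (0:ℝ), ∃ δ > (0:ℝ), ∀ x ∈ C, x - xb ∈ dirNbhd d ρ δ → f xb ≤ f x) :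
    0 ≤ fderiv ℝ f xb d := by
  obtain ⟨ρ, hρ, δ, hδ, hopt⟩ := hopt
  by_cases hd0 : d = 0
  · simp [hd0]
  obtain ⟨t, dk, htpos, ht0, hdk, hmem⟩ := hd
  set f' := fderiv ℝ f xb with hf'
  have hdiff : HasFDerivAt f f' xb := (hf.differentiable one_ne_zero xb).hasFDerivAt
  have hsm : Tendsto (fun k => t k • dk k) atTop (𝓝 0) := by
    have := ht0.smul hdk
    simpa using this
  have hxk : Tendsto (fun k => xb + t k • dk k) atTop (𝓝 xb) := by
    simpa using tendsto_const_nhds.add hsm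
  -- eventually in dirNbhd
  have hδev : ∀ᶠ k in atTop, ‖t k • dk k‖ ≤ δ := by
    have := hsm.norm
    simp only [norm_zero] at this
    filter_upwards [this.eventually_le_const hδ] with k hk using hk
  have hcone : Tendsto (fun k => ‖‖d‖ • dk k - ‖dk k‖ • d‖) atTop (𝓝 0) := by
    have h1 : Tendsto (fun k => ‖d‖ • dk k - ‖dk k‖ • d) atTop
        (𝓝 (‖d‖ • d - ‖d‖ • d)) := (tendsto_const_nhds.smul hdk).sub (hdk.norm.smul tendsto_const_nhds)
    simpa using h1.norm
  have hρev : ∀ᶠ k in atTop, ‖‖d‖ • dk k - ‖dk k‖ • d‖ ≤ ρ * ‖dk k‖ * ‖d‖ := by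
    have hR : Tendsto (fun k => ρ * ‖dk k‖ * ‖d‖) atTop (𝓝 (ρ * ‖d‖ * ‖d‖)) := by
      exact (tendsto_const_nhds.mul hdk.norm).mul tendsto_const_nhds
    have hdn : (0:ℝ) < ‖d‖ := norm_pos_iff.mpr hd0
    have hpos : (0:ℝ) < ρ * ‖d‖ * ‖d‖ := by positivity
    have := hcone.sub hR
    have h0 : Tendsto (fun k => ‖‖d‖ • dk k - ‖dk k‖ • d‖ - ρ * ‖dk k‖ * ‖d‖) atTop
        (𝓝 (0 - ρ * ‖d‖ * ‖d‖)) := this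
    filter_upwards [h0.eventually_le_const (by linarith : (0:ℝ) - ρ * ‖d‖ * ‖d‖ < 0)] with k hk
    linarith
  have hinNbhd : ∀ᶠ k in atTop, t k • dk k ∈ dirNbhd d ρ δ := by
    filter_upwards [hδev, hρev] with k h1 h2
    refine ⟨h1, ?_⟩
    have htk := (htpos k)
    have hn : ‖t k • dk k‖ = t k * ‖dk k‖ := by
      rw [norm_smul, Real.norm_eq_abs, abs_of_pos htk]
    rw [hn]
    have : ‖d‖ • t k • dk k - (t k * ‖dk k‖) • d = t k • (‖d‖ • dk k - ‖dk k‖ • d) := by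
      rw [smul_sub]; rw [smul_comm (‖d‖) (t k), mul_smul]
    rw [this, norm_smul, Real.norm_eq_abs, abs_of_pos htk]
    calc t k * ‖‖d‖ • dk k - ‖dk k‖ • d‖ ≤ t k * (ρ * ‖dk k‖ * ‖d‖) := by
          exact mul_le_mul_of_nonneg_left h2 htk.le
      _ = ρ * (t k * ‖dk k‖) * ‖d‖ := by ring
  have hfge : ∀ᶠ k in atTop, f xb ≤ f (xb + t k • dk k) := by
    filter_upwards [hinNbhd] with k hk
    exact hopt _ (hmem k) (by simpa using hk)
  -- little-o argument
  have hlo : (fun k => f (xb + t k • dk k) - f xb - f' (t k • dk k)) =o[atTop]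
      (fun k => t k) := by
    have h1 := hdiff.isLittleO.comp_tendsto hxk
    simp only [Function.comp_def, add_sub_cancel_left] at h1
    refine h1.trans_isBigO ?_
    have hb : ∀ᶠ k in atTop, ‖dk k‖ ≤ ‖d‖ + 1 := by
      have := hdk.norm.eventually_le_const (by linarith [norm_nonneg d] : ‖d‖ < ‖d‖ + 1)
      filter_upwards [this] with k hk using hk
    refine Asymptotics.IsBigO.of_bound (‖d‖ + 1) ?_
    filter_upwards [hb] with k hk
    rw [norm_smul, Real.norm_eq_abs, abs_of_pos (htpos k)]
    calc t k * ‖dk k‖ ≤ t k * (‖d‖ + 1) := mul_le_mul_of_nonneg_left hk (htpos k).le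
      _ = (‖d‖ + 1) * t k := by ring
  have hquot0 : Tendsto (fun k => (f (xb + t k • dk k) - f xb - f' (t k • dk k)) / t k)
      atTop (𝓝 0) := hlo.tendsto_div_nhds_zero
  have hfd : Tendsto (fun k => f' (dk k)) atTop (𝓝 (f' d)) := (f'.continuous.tendsto d).comp hdk
  have hquot : Tendsto (fun k => (f (xb + t k • dk k) - f xb) / t k) atTop (𝓝 (f' d)) := by
    have h := hquot0.add hfd
    rw [zero_add] at h
    refine h.congr (fun k => ?_)
    have htk : t k ≠ 0 := (htpos k).ne'
    rw [map_smul]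
    field_simp
    ring
  refine ge_of_tendsto hquot ?_
  filter_upwards [hfge] with k hk
  exact div_nonneg (by linarith) (htpos k).le
end
end
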